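/- arXiv:2310.11734 — 8 statements merged into one kernel-verified Lean document; each statement's English description precedes it below -/
import Mathlib

section
/- Let {P_n} be the Brenke polynomial sequence associated with (a_k) and (b_k), and suppose {P_n} is a d-orthogonal polynomial set for some integer d ≥ 1. Then for every n ≥ d+1 one has ∑_{i=0}^{d+1} ( ∑_{j=i}^{d+1} a_{j+1}·â_{d+1−j} ) · Δ_{n−i} = 0, where â : ℕ → ℂ is defined by â_0 = 1 and ∑_{k=0}^{n} â_k a_{n−k} = 0 for all n ≥ 1 (the coefficients of the reciprocal of the formal power series A(t) = ∑_k a_k t^k). -/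
open Finset Polynomial

noncomputable def alph (a r : ℕ → ℂ) (n : ℕ) : ℕ → ℂ
  | m => a m * r (n - m) -
      ∑ i ∈ (Finset.range m).attach, alph a r n i * a (m - i)
  decreasing_by exact Finset.mem_range.mp i.2

lemma halph (a r : ℕ → ℂ) (ha0 : a 0 = 1) (n m : ℕ) :
    ∑ i ∈ Finset.range (m+1), alph a r n i * a (m - i) = a m * r (n - m) := by
  rw [Finset.sum_range_succ]
  have h := alph.eq_def a r n m
  rw [← Finset.sum_attach (Finset.range m) (fun i => alph a r n i * a (m - i))]
  rw [h]
  simp [ha0]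

lemma vanish (d : ℕ) (u : Fin d → (Polynomial ℂ →ₗ[ℂ] ℂ)) (P : ℕ → Polynomial ℂ)
    (b : ℕ → ℂ) (hb : ∀ k, b k ≠ 0)
    (hdeg : ∀ m, (P m).degree = m) (hlc : ∀ m, (P m).coeff m = b m)
    (h1 : ∀ (k : Fin d) (j m : ℕ), m > j * d + (k : ℕ) → u k (X ^ j * P m) = 0)
    (h2 : ∀ (k : Fin d) (j : ℕ), u k (X ^ j * P (j * d + (k : ℕ))) ≠ 0)
    (hd : 1 ≤ d) :
    ∀ (N : ℕ) (Q : Polynomial ℂ), Q.degree < (N : ℕ) →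
      (∀ (k : Fin d) (j : ℕ), j * d + (k : ℕ) < N → u k (X ^ j * Q) = 0) → Q = 0 := by
  intro N
  induction N with
  | zero =>
      intro Q hQ _
      exact Polynomial.degree_eq_bot.mp (Nat.WithBot.lt_zero_iff.mp hQ)
  | succ N ih =>
      intro Q hQ hu
      set c : ℂ := Q.coeff N / b N with hc
      have hQ' : (Q - C c * P N).degree < (N : ℕ) := by
        refine (Polynomial.degree_lt_iff_coeff_zero _ _).mpr ?_
        intro e he
        rw [Polynomial.coeff_sub, Polynomial.coeff_C_mul]
        rcases eq_or_lt_of_le (Nat.cast_le.mp he) with h | h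
        · subst h
          rw [hlc, hc, div_mul_cancel₀ _ (hb N), sub_self]
        · have e1 : Q.coeff e = 0 := by
            apply Polynomial.coeff_eq_zero_of_degree_lt
            exact lt_of_lt_of_le hQ (by exact_mod_cast h)
          have e2 : (P N).coeff e = 0 := by
            apply Polynomial.coeff_eq_zero_of_degree_lt
            rw [hdeg]; exact_mod_cast h
          rw [e1, e2, mul_zero, sub_zero]
      have hu' : ∀ (k : Fin d) (j : ℕ), j * d + (k : ℕ) < N →
          u k (X ^ j * (Q - C c * P N)) = 0 := by
        intro k j hjk
        have hsplit : X ^ j * (Q - C c * P N) = X ^ j * Q - c • (X ^ j * P N) := by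
          rw [Polynomial.smul_eq_C_mul]; ring
        rw [hsplit, map_sub, map_smul, hu k j (by omega), h1 k j N (by omega),
          smul_zero, sub_zero]
      have h0 := ih (Q - C c * P N) hQ' hu'
      have hQeq : Q = C c * P N := sub_eq_zero.mp h0
      have hk : (N % d) < d := Nat.mod_lt _ (by omega)
      have hNd : (N / d) * d + (N % d) = N := by
        rw [Nat.mul_comm]; exact Nat.div_add_mod N d
      have hz := hu ⟨N % d, hk⟩ (N / d) (by simp only [hNd]; omega)
      rw [hQeq] at hz
      have hsplit : X ^ (N / d) * (C c * P N) = c • (X ^ (N / d) * P N) := by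
        rw [Polynomial.smul_eq_C_mul]; ring
      rw [hsplit, map_smul] at hz
      have h2' := h2 ⟨N % d, hk⟩ (N / d)
      rw [hNd] at h2'
      have hc0 : c = 0 := by
        rcases smul_eq_zero.mp hz with h | h
        · exact h
        · exact absurd h h2'
      rw [hQeq, hc0, map_zero, zero_mul]

lemma swap_sum (D : ℕ) (g : ℕ → ℕ → ℂ) :
    ∑ m ∈ Finset.range (D+2), ∑ i ∈ Finset.range (min m D + 1), g m i
    = ∑ i ∈ Finset.range (D+1), ∑ m ∈ Finset.Icc i (D+1), g m i := by
  have h1 : ∀ m ∈ Finset.range (D+2), ∑ i ∈ Finset.range (min m D + 1), g m i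
      = ∑ i ∈ Finset.range (D+1), if i ≤ m then g m i else 0 := by
    intro m hm
    rw [Finset.mem_range] at hm
    rw [← Finset.sum_filter]
    congr 1
    ext x
    simp only [Finset.mem_filter, Finset.mem_range]
    omega
  rw [Finset.sum_congr rfl h1, Finset.sum_comm]
  apply Finset.sum_congr rfl
  intro i hi
  rw [Finset.mem_range] at hi
  rw [← Finset.sum_filter]
  congr 1
  ext x
  simp only [Finset.mem_filter, Finset.mem_range, Finset.mem_Icc]
  omega

lemma inner_zero (i d : ℕ) (a ahat : ℕ → ℂ)
    (hahat : ∀ n, 1 ≤ n → ∑ k ∈ Finset.range (n + 1), ahat k * a (n - k) = 0)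
    (hi : i ≤ d + 1) :
    ∑ m ∈ Finset.Icc i (d+2), ahat (d+2-m) * a (m-i) = 0 := by
  have hIcc : Finset.Icc i (d+2) = Finset.Ico i (d+3) := by
    ext x; simp only [Finset.mem_Icc, Finset.mem_Ico]; omega
  rw [hIcc, Finset.sum_Ico_eq_sum_range]
  have h1 : ∀ t ∈ Finset.range (d+3-i),
      ahat (d+2-(i+t)) * a (i+t-i) = (fun k => ahat k * a (d+2-i-k)) (d+3-i-1-t) := by
    intro t ht
    rw [Finset.mem_range] at ht
    have e1 : d+2-(i+t) = d+3-i-1-t := by omega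
    have e2 : i+t-i = t := by omega
    have e3 : d+2-i-(d+3-i-1-t) = t := by omega
    simp only [e1, e2, e3]
  rw [Finset.sum_congr rfl h1,
    Finset.sum_range_reflect (fun k => ahat k * a (d+2-i-k)) (d+3-i)]
  have h2 : d+3-i = (d+2-i)+1 := by omega
  rw [h2]
  exact hahat (d+2-i) (by omega)


lemma telescope (D n : ℕ) (hn : D + 1 ≤ n) (c e rr Δ : ℕ → ℂ)
    (hΔrr : ∀ k, Δ k = rr (k+1) - rr k)
    (hc0 : c 0 = - e 0)
    (hstep : ∀ m, 1 ≤ m → m ≤ D+1 → c (m-1) = e m + c m)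
    (hctop : c (D+1) = e (D+2)) :
    ∑ i ∈ Finset.range (D+2), c i * Δ (n-i)
      = - ∑ m ∈ Finset.range (D+3), e m * rr (n+1-m) := by
  have hsplit : ∀ i ∈ Finset.range (D+2), c i * Δ (n-i)
      = c i * rr (n+1-i) - c i * rr (n+1-(i+1)) := by
    intro i hi
    rw [Finset.mem_range] at hi
    have e1 : n - i + 1 = n + 1 - i := by omega
    have e2 : n - i = n + 1 - (i+1) := by omega
    rw [hΔrr (n-i), e1, ← e2, mul_sub]
  rw [Finset.sum_congr rfl hsplit, Finset.sum_sub_distrib]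
  have h1 : ∑ i ∈ Finset.range (D+2), c i * rr (n+1-i)
      = ∑ m ∈ Finset.range (D+3), (if m ≤ D+1 then c m else 0) * rr (n+1-m) := by
    rw [show D+3 = (D+2)+1 from by omega]
    conv_rhs => rw [Finset.sum_range_succ]
    rw [if_neg (by omega), zero_mul, add_zero]
    exact Finset.sum_congr rfl (fun i hi => by
      rw [Finset.mem_range] at hi
      rw [if_pos (by omega)])
  have h2 : ∑ i ∈ Finset.range (D+2), c i * rr (n+1-(i+1))
      = ∑ m ∈ Finset.range (D+3), (if m = 0 then 0 else c (m-1)) * rr (n+1-m) := by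
    rw [show D+3 = (D+2)+1 from by omega]
    conv_rhs => rw [Finset.sum_range_succ'
      (fun m => (if m = 0 then 0 else c (m-1)) * rr (n+1-m)) (D+2)]
    simp only [Nat.add_eq_zero, one_ne_zero, and_false, if_false, Nat.add_sub_cancel,
      if_pos, zero_mul, add_zero, ite_false, reduceIte]
  rw [h1, h2, ← Finset.sum_sub_distrib, ← Finset.sum_neg_distrib]
  apply Finset.sum_congr rfl
  intro m hm
  rw [Finset.mem_range] at hm
  have hkey : (if m ≤ D+1 then c m else 0) - (if m = 0 then 0 else c (m-1)) = - e m := by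
    rcases Nat.eq_zero_or_pos m with h0 | h0
    · subst h0
      rw [if_pos (by omega), if_pos rfl, sub_zero, hc0]
    · rcases Nat.lt_or_ge m (D+2) with hlt | hge
      · rw [if_pos (by omega), if_neg (by omega), hstep m (by omega) (by omega)]
        ring
      · have hm2 : m = D+2 := by omega
        subst hm2
        rw [if_neg (by omega), if_neg (by omega), show D+2-1 = D+1 from by omega, hctop]
        ring
  calc (if m ≤ D+1 then c m else 0) * rr (n+1-m) - (if m = 0 then 0 else c (m-1)) * rr (n+1-m)
      = ((if m ≤ D+1 then c m else 0) - (if m = 0 then 0 else c (m-1))) * rr (n+1-m) := by ring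
    _ = - (e m * rr (n+1-m)) := by rw [hkey]; ring

/-- For a Brenke polynomial sequence which is `d`-orthogonal (`d ≥ 1`),
for every `n ≥ d+1` one has
`∑_{i=0}^{d+1} (∑_{j=i}^{d+1} a_{j+1}·â_{d+1−j}) · Δ_{n−i} = 0`. -/
theorem brenke_d_orthogonal_necessary_condition
    (a b : ℕ → ℂ) (ha0 : a 0 = 1) (hb0 : b 0 = 1) (hb : ∀ k, b k ≠ 0)
    (P : ℕ → Polynomial ℂ)
    (hP : ∀ n, P n = ∑ k ∈ Finset.range (n + 1), Polynomial.C (a (n - k) * b k) * X ^ k)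
    (d : ℕ) (hd : 1 ≤ d)
    (horth : ∃ u : Fin d → (Polynomial ℂ →ₗ[ℂ] ℂ),
      ∀ k : Fin d,
        (∀ m n : ℕ, n > m * d + (k : ℕ) → u k (X ^ m * P n) = 0) ∧
        (∀ m : ℕ, u k (X ^ m * P (m * d + (k : ℕ))) ≠ 0))
    (ahat : ℕ → ℂ) (hahat0 : ahat 0 = 1)
    (hahat : ∀ n, 1 ≤ n → ∑ k ∈ Finset.range (n + 1), ahat k * a (n - k) = 0)
    (r : ℕ → ℂ) (hr : ∀ n, r n = b n / b (n + 1))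
    (Δ : ℕ → ℂ) (hΔ0 : Δ 0 = r 0) (hΔ : ∀ n, Δ (n + 1) = r (n + 1) - r n) :
    ∀ n, d + 1 ≤ n →
      ∑ i ∈ Finset.range (d + 2),
        (∑ j ∈ Finset.Icc i (d + 1), a (j + 1) * ahat (d + 1 - j)) * Δ (n - i) = 0 := by
  -- coefficients of P
  have coeffP : ∀ m k, (P m).coeff k = if k ≤ m then a (m - k) * b k else 0 := by
    intro m k
    rw [hP, Polynomial.finset_sum_coeff]
    simp only [Polynomial.coeff_C_mul, Polynomial.coeff_X_pow]
    by_cases hk : k ≤ m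
    · rw [if_pos hk, Finset.sum_eq_single k]
      · simp
      · intro i _ hik; simp [Ne.symm hik]
      · intro h; exact absurd (Finset.mem_range.mpr (by omega)) h
    · rw [if_neg hk]
      apply Finset.sum_eq_zero
      intro i hi
      rw [Finset.mem_range] at hi
      have : k ≠ i := by omega
      simp [this]
  have lcP : ∀ m, (P m).coeff m = b m := by
    intro m; rw [coeffP]; simp [ha0]
  have degP : ∀ m, (P m).degree = m := by
    intro m
    apply le_antisymm
    · refine (Polynomial.degree_le_iff_coeff_zero _ _).mpr ?_
      intro e he
      have h : m < e := by exact_mod_cast he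
      rw [coeffP]; simp [Nat.not_le.mpr h]
    · exact Polynomial.le_degree_of_ne_zero (by rw [lcP]; exact hb m)
  obtain ⟨u, hu⟩ := horth
  intro n hn
  -- the shifted r sequence, with rr 0 = "r (-1)" = 0
  set rr : ℕ → ℂ := fun k => if k = 0 then 0 else r (k-1) with hrrdef
  have hΔrr : ∀ k, Δ k = rr (k+1) - rr k := by
    intro k
    cases k with
    | zero => simp [hrrdef, hΔ0]
    | succ k => simp [hrrdef, hΔ]
  set A : ℕ → ℂ := alph a r n with hA
  have halph' : ∀ m, ∑ i ∈ Finset.range (m+1), A i * a (m - i) = a m * r (n - m) := by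
    intro m; rw [hA]; exact halph a r ha0 n m
  set Q : Polynomial ℂ := X * P n - ∑ i ∈ Finset.range (d+2), C (A i) * P (n+1-i)
    with hQdef
  have hcoeffQ : ∀ e, Q.coeff e
      = (X * P n).coeff e - ∑ i ∈ Finset.range (d+2), A i * (P (n+1-i)).coeff e := by
    intro e
    rw [hQdef, Polynomial.coeff_sub, Polynomial.finset_sum_coeff]
    simp only [Polynomial.coeff_C_mul]
  have coeffXP : ∀ e, (X * P n).coeff e
      = if 1 ≤ e ∧ e ≤ n+1 then a (n+1-e) * b (e-1) else 0 := by
    intro e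
    cases e with
    | zero => simp
    | succ e =>
      rw [Polynomial.coeff_X_mul, coeffP]
      by_cases h : e ≤ n
      · rw [if_pos h, if_pos ⟨by omega, by omega⟩]
        have e1 : n - e = n + 1 - (e+1) := by omega
        have e2 : e = e + 1 - 1 := by omega
        rw [← e1, ← e2]
      · rw [if_neg h, if_neg (by omega)]
  have hQtop : ∀ e, n - d ≤ e → Q.coeff e = 0 := by
    intro e he
    rw [hcoeffQ, coeffXP]
    by_cases hbig : e ≤ n + 1
    · have hm1 : n + 1 - e ≤ d + 1 := by omega
      have hsum : ∑ i ∈ Finset.range (d+2), A i * (P (n+1-i)).coeff e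
          = ∑ i ∈ Finset.range ((n+1-e)+1), A i * (P (n+1-i)).coeff e := by
        refine (Finset.sum_subset (Finset.range_subset_range.mpr (by omega)) ?_).symm
        intro i hi1 hi2
        rw [Finset.mem_range, not_lt] at hi2
        rw [coeffP, if_neg (by omega), mul_zero]
      have hsum2 : ∑ i ∈ Finset.range ((n+1-e)+1), A i * (P (n+1-i)).coeff e
          = (∑ i ∈ Finset.range ((n+1-e)+1), A i * a ((n+1-e) - i)) * b e := by
        rw [Finset.sum_mul]
        apply Finset.sum_congr rfl
        intro i hi
        rw [Finset.mem_range] at hi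
        rw [coeffP, if_pos (by omega)]
        have : n+1-i-e = n+1-e-i := by omega
        rw [this]; ring
      rw [hsum, hsum2, halph' (n+1-e), hr (n - (n+1-e))]
      have e3 : n - (n+1-e) + 1 = e := by omega
      have e4 : n - (n+1-e) = e - 1 := by omega
      rw [e3, e4, if_pos ⟨by omega, hbig⟩, mul_assoc,
        div_mul_cancel₀ _ (hb e), sub_self]
    · rw [if_neg (by omega), Finset.sum_eq_zero, sub_zero]
      intro i hi
      rw [Finset.mem_range] at hi
      rw [coeffP, if_neg (by omega), mul_zero]
  have hdegQ : Q.degree < ((n - d : ℕ) : WithBot ℕ) := by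
    refine (Polynomial.degree_lt_iff_coeff_zero _ _).mpr ?_
    intro e he
    exact hQtop e (by exact_mod_cast he)
  have hQ0 : Q = 0 := by
    apply vanish d u P b hb degP lcP (fun k j m => (hu k).1 j m)
      (fun k j => (hu k).2 j) hd (n-d) Q hdegQ
    intro k j hjk
    have hQsplit : X ^ j * Q
        = X ^ (j+1) * P n - ∑ i ∈ Finset.range (d+2), A i • (X ^ j * P (n+1-i)) := by
      rw [hQdef, mul_sub, Finset.mul_sum]
      congr 1
      · ring
      · exact Finset.sum_congr rfl (fun i _ => by rw [Polynomial.smul_eq_C_mul]; ring)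
    rw [hQsplit, map_sub, map_sum]
    have e1 : (u k) (X ^ (j+1) * P n) = 0 := by
      apply (hu k).1
      have : (j+1)*d + (k:ℕ) = j*d + (k:ℕ) + d := by ring
      omega
    have e2 : ∑ i ∈ Finset.range (d+2), (u k) (A i • (X ^ j * P (n+1-i))) = 0 := by
      apply Finset.sum_eq_zero
      intro i hi
      rw [Finset.mem_range] at hi
      rw [map_smul, (hu k).1 j (n+1-i) (by omega), smul_zero]
    rw [e1, e2, sub_zero]
  -- the combined equations
  have eqr : ∀ m, m ≤ d + 2 →
      a m * rr (n+1-m) = ∑ i ∈ Finset.range (min m (d+1) + 1), A i * a (m-i) := by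
    intro m hm
    rcases Nat.lt_or_ge m (d+2) with hmlt | hmge
    · have hmin : min m (d+1) = m := by omega
      rw [hmin, halph' m]
      have h1 : n + 1 - m ≠ 0 := by omega
      have h2 : n + 1 - m - 1 = n - m := by omega
      simp [hrrdef, h1, h2]
    · have hm2 : m = d + 2 := by omega
      subst hm2
      have hc := hQtop -- unused
      have hz : Q.coeff (n-d-1) = 0 := by rw [hQ0]; simp
      rw [hcoeffQ, coeffXP] at hz
      have hsum : ∑ i ∈ Finset.range (d+2), A i * (P (n+1-i)).coeff (n-d-1)
          = (∑ i ∈ Finset.range (d+2), A i * a (d+2-i)) * b (n-d-1) := by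
        rw [Finset.sum_mul]
        apply Finset.sum_congr rfl
        intro i hi
        rw [Finset.mem_range] at hi
        rw [coeffP, if_pos (by omega)]
        have : n+1-i-(n-d-1) = d+2-i := by omega
        rw [this]; ring
      rw [hsum] at hz
      have hmin : min (d+2) (d+1) = d+1 := by omega
      rw [hmin]
      rcases Nat.lt_or_ge n (d+2) with hn2 | hn2
      · -- n = d+1, so n-d-1 = 0
        have hnd : n = d + 1 := by omega
        have h0 : n - d - 1 = 0 := by omega
        have h00 : n + 1 - (d+2) = 0 := by omega
        rw [h0] at hz
        rw [if_neg (by omega)] at hz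
        rw [zero_sub, neg_eq_zero] at hz
        have hzS : (∑ i ∈ Finset.range (d+2), A i * a (d+2-i)) = 0 := by
          rcases mul_eq_zero.mp hz with h | h
          · exact h
          · exact absurd h (hb 0)
        rw [h00, hzS]
        simp [hrrdef]
      · -- n ≥ d+2
        have h1 : ¬ (n - d - 1 = 0) := by omega
        rw [if_pos ⟨by omega, by omega⟩] at hz
        have e1 : n + 1 - (n-d-1) = d+2 := by omega
        have e2 : n - d - 1 - 1 = n - d - 2 := by omega
        rw [e1, e2] at hz
        have e3 : n + 1 - (d + 2) = n - d - 1 := by omega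
        have hrr1 : rr (n - d - 1) = b (n-d-2) / b (n-d-1) := by
          simp only [hrrdef, if_neg h1]
          rw [hr (n-d-1-1), e2]
          have e4 : n - d - 2 + 1 = n - d - 1 := by omega
          rw [e4]
        rw [e3, hrr1, ← mul_div_assoc, div_eq_iff (hb (n-d-1))]
        exact sub_eq_zero.mp hz
  -- grand sum is zero
  have hS : ∑ m ∈ Finset.range (d+3), ahat (d+2-m) * (a m * rr (n+1-m)) = 0 := by
    have step1 : ∀ m ∈ Finset.range (d+3),
        ahat (d+2-m) * (a m * rr (n+1-m))
        = ∑ i ∈ Finset.range (min m (d+1) + 1), ahat (d+2-m) * (A i * a (m-i)) := by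
      intro m hm
      rw [Finset.mem_range] at hm
      rw [eqr m (by omega), Finset.mul_sum]
    rw [Finset.sum_congr rfl step1]
    have hsw := swap_sum (d+1) (fun m i => ahat (d+2-m) * (A i * a (m-i)))
    rw [show d+1+2 = d+3 from by omega, show d+1+1 = d+2 from by omega] at hsw
    rw [hsw]
    apply Finset.sum_eq_zero
    intro i hi
    rw [Finset.mem_range] at hi
    have hre : ∀ m ∈ Finset.Icc i (d+2),
        ahat (d+2-m) * (A i * a (m-i)) = A i * (ahat (d+2-m) * a (m-i)) := by
      intro m _; ring
    rw [Finset.sum_congr rfl hre, ← Finset.mul_sum,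
      inner_zero i d a ahat hahat (by omega), mul_zero]
  -- the three conditions on the coefficients c
  have hc0' : ∑ j ∈ Finset.Icc 0 (d+1), a (j+1) * ahat (d+1-j)
      = -(a 0 * ahat (d+2-0)) := by
    have hIcc : Finset.Icc 0 (d+1) = Finset.range (d+2) := by
      ext x; simp only [Finset.mem_Icc, Finset.mem_range]; omega
    have hrefl : ∀ j ∈ Finset.range (d+2),
        a (j+1) * ahat (d+1-j) = (fun k => ahat k * a (d+2-k)) (d+2-1-j) := by
      intro j hj
      rw [Finset.mem_range] at hj
      have e1 : d+2-1-j = d+1-j := by omega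
      have e2 : d+2-(d+1-j) = j+1 := by omega
      simp only [e1, e2]
      ring
    rw [hIcc, Finset.sum_congr rfl hrefl,
      Finset.sum_range_reflect (fun k => ahat k * a (d+2-k)) (d+2)]
    have h := hahat (d+2) (by omega)
    rw [Finset.sum_range_succ, Nat.sub_self, ha0, mul_one] at h
    rw [Nat.sub_zero, ha0, one_mul]
    linear_combination h
  have hstep' : ∀ m, 1 ≤ m → m ≤ d+1 →
      ∑ j ∈ Finset.Icc (m-1) (d+1), a (j+1) * ahat (d+1-j)
      = a m * ahat (d+2-m) + ∑ j ∈ Finset.Icc m (d+1), a (j+1) * ahat (d+1-j) := by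
    intro m h1 h2
    have hins : Finset.Icc (m-1) (d+1) = insert (m-1) (Finset.Icc m (d+1)) := by
      ext x; simp only [Finset.mem_Icc, Finset.mem_insert]; omega
    have hnotmem : (m-1) ∉ Finset.Icc m (d+1) := by
      simp only [Finset.mem_Icc]; omega
    rw [hins, Finset.sum_insert hnotmem]
    have e1 : m - 1 + 1 = m := by omega
    have e2 : d + 1 - (m-1) = d+2-m := by omega
    rw [e1, e2]
  have hctop' : ∑ j ∈ Finset.Icc (d+1) (d+1), a (j+1) * ahat (d+1-j)
      = a (d+2) * ahat (d+2-(d+2)) := by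
    rw [Finset.Icc_self, Finset.sum_singleton]
    have e1 : d+1+1 = d+2 := by omega
    have e2 : d+1-(d+1) = 0 := by omega
    have e3 : d+2-(d+2) = 0 := by omega
    rw [e1, e2, e3]
  have htel := telescope d n hn
    (fun i => ∑ j ∈ Finset.Icc i (d+1), a (j+1) * ahat (d+1-j))
    (fun m => a m * ahat (d+2-m)) rr Δ hΔrr hc0' hstep' hctop'
  rw [htel, neg_eq_zero]
  rw [Finset.sum_congr rfl (fun m _ => by ring :
    ∀ m ∈ Finset.range (d+3), a m * ahat (d+2-m) * rr (n+1-m)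
      = ahat (d+2-m) * (a m * rr (n+1-m)))]
  exact hS
end

section
/- Let {P_n} be the Brenke polynomial sequence associated with (a_k) and (b_k). If {P_n} is 2-orthogonal, then for every n ≥ 3: (−a_1⁴ − 2a_1a_3 + 3a_1²a_2 − a_2² + a_4)·Δ_n + (a_1²a_2 − a_2² − a_1a_3 + a_4)·Δ_{n−1} + (a_4 − a_1a_3)·Δ_{n−2} + a_4·Δ_{n−3} = 0, and moreover (a_1³ − 2a_1a_2 + a_3)·Δ_n + (a_3 − a_1a_2)·Δ_{n−1} + a_3·Δ_{n−2} ≠ 0. -/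
open Finset Polynomial

lemma coeff_P (a b : ℕ → ℂ) (P : ℕ → Polynomial ℂ)
    (hP : ∀ n, P n = ∑ k ∈ Finset.range (n + 1), Polynomial.C (a (n - k) * b k) * X ^ k)
    (j k : ℕ) : (P j).coeff k = if k ≤ j then a (j - k) * b k else 0 := by
  rw [hP, finset_sum_coeff]
  simp only [coeff_C_mul, coeff_X_pow]
  by_cases h : k ≤ j
  · rw [if_pos h, Finset.sum_eq_single k]
    · simp
    · intro i _ hik
      simp [Ne.symm hik]
    · intro hk
      exact absurd (Finset.mem_range.mpr (Nat.lt_succ_of_le h)) hk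
  · rw [if_neg h, Finset.sum_eq_zero]
    intro i hi
    rw [Finset.mem_range, Nat.lt_succ_iff] at hi
    have : k ≠ i := by omega
    simp [this]

lemma natDegree_P (a b : ℕ → ℂ) (P : ℕ → Polynomial ℂ)
    (hP : ∀ n, P n = ∑ k ∈ Finset.range (n + 1), Polynomial.C (a (n - k) * b k) * X ^ k)
    (j : ℕ) : (P j).natDegree ≤ j := by
  rw [Polynomial.natDegree_le_iff_coeff_eq_zero]
  intro m hm
  rw [coeff_P a b P hP]
  simp [Nat.not_le.mpr hm]

lemma expand_P (a b : ℕ → ℂ) (ha0 : a 0 = 1) (hb0 : b 0 = 1) (hb : ∀ k, b k ≠ 0)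
    (P : ℕ → Polynomial ℂ)
    (hP : ∀ n, P n = ∑ k ∈ Finset.range (n + 1), Polynomial.C (a (n - k) * b k) * X ^ k) :
    ∀ N (q : Polynomial ℂ), q.natDegree ≤ N →
      ∃ c : ℕ → ℂ, q = ∑ j ∈ Finset.range (N + 1), Polynomial.C (c j) * P j := by
  intro N
  induction N with
  | zero =>
    intro q hq
    refine ⟨fun _ => q.coeff 0, ?_⟩
    have hP0 : P 0 = 1 := by
      rw [hP]; simp [ha0, hb0]
    rw [Finset.sum_range_one, hP0, mul_one]
    exact (Polynomial.eq_C_of_natDegree_le_zero hq)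
  | succ N ih =>
    intro q hq
    set d : ℂ := q.coeff (N + 1) / b (N + 1) with hd
    have hq' : (q - Polynomial.C d * P (N + 1)).natDegree ≤ N := by
      rw [Polynomial.natDegree_le_iff_coeff_eq_zero]
      intro m hm
      rw [Polynomial.coeff_sub, coeff_C_mul, coeff_P a b P hP]
      rcases Nat.lt_or_ge (N + 1) m with h | h
      · rw [Polynomial.coeff_eq_zero_of_natDegree_lt (lt_of_le_of_lt hq h)]
        simp [Nat.not_le.mpr h]
      · have hm' : m = N + 1 := by omega
        subst hm'
        simp [hd, ha0, div_mul_cancel₀ _ (hb (N + 1))]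
    obtain ⟨c, hc⟩ := ih _ hq'
    refine ⟨fun j => if j = N + 1 then d else c j, ?_⟩
    rw [Finset.sum_range_succ]
    beta_reduce
    rw [if_pos rfl]
    have : ∑ j ∈ Finset.range (N + 1), Polynomial.C (if j = N + 1 then d else c j) * P j
        = ∑ j ∈ Finset.range (N + 1), Polynomial.C (c j) * P j := by
      apply Finset.sum_congr rfl
      intro j hj
      rw [Finset.mem_range] at hj
      rw [if_neg (by omega)]
    rw [this, ← hc]
    ring

set_option maxHeartbeats 2000000 in
/-- For a 2-orthogonal Brenke polynomial sequence, for every `n ≥ 3`,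
`(−a₁⁴−2a₁a₃+3a₁²a₂−a₂²+a₄)Δₙ + (a₁²a₂−a₂²−a₁a₃+a₄)Δₙ₋₁ + (a₄−a₁a₃)Δₙ₋₂ + a₄Δₙ₋₃ = 0`
and `(a₁³−2a₁a₂+a₃)Δₙ + (a₃−a₁a₂)Δₙ₋₁ + a₃Δₙ₋₂ ≠ 0`. -/
theorem brenke_two_orthogonal_recurrence_and_regularity
    (a b : ℕ → ℂ) (ha0 : a 0 = 1) (hb0 : b 0 = 1) (hb : ∀ k, b k ≠ 0)
    (P : ℕ → Polynomial ℂ)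
    (hP : ∀ n, P n = ∑ k ∈ Finset.range (n + 1), Polynomial.C (a (n - k) * b k) * X ^ k)
    (horth : ∃ u : Fin 2 → (Polynomial ℂ →ₗ[ℂ] ℂ),
      ∀ k : Fin 2,
        (∀ m n : ℕ, n > m * 2 + (k : ℕ) → u k (X ^ m * P n) = 0) ∧
        (∀ m : ℕ, u k (X ^ m * P (m * 2 + (k : ℕ))) ≠ 0))
    (r : ℕ → ℂ) (hr : ∀ n, r n = b n / b (n + 1))
    (Δ : ℕ → ℂ) (hΔ0 : Δ 0 = r 0) (hΔ : ∀ n, Δ (n + 1) = r (n + 1) - r n) :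
    ∀ n, 3 ≤ n →
      ((-(a 1) ^ 4 - 2 * a 1 * a 3 + 3 * (a 1) ^ 2 * a 2 - (a 2) ^ 2 + a 4) * Δ n
        + ((a 1) ^ 2 * a 2 - (a 2) ^ 2 - a 1 * a 3 + a 4) * Δ (n - 1)
        + (a 4 - a 1 * a 3) * Δ (n - 2)
        + a 4 * Δ (n - 3) = 0)
      ∧ (((a 1) ^ 3 - 2 * a 1 * a 2 + a 3) * Δ n
        + (a 3 - a 1 * a 2) * Δ (n - 1)
        + a 3 * Δ (n - 2) ≠ 0) := by
  obtain ⟨u, hu⟩ := horth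
  intro n hn
  obtain ⟨m, rfl⟩ : ∃ m, n = m + 3 := ⟨n - 3, by omega⟩
  obtain ⟨α, hα⟩ : ∃ x : ℂ, x = r (m + 3) := ⟨_, rfl⟩
  obtain ⟨β, hβ⟩ : ∃ x : ℂ, x = a 1 * (r (m + 2) - r (m + 3)) := ⟨_, rfl⟩
  obtain ⟨γ, hγ⟩ : ∃ x : ℂ, x = a 2 * (r (m + 1) - r (m + 3)) - β * a 1 := ⟨_, rfl⟩
  obtain ⟨δ, hδ⟩ : ∃ x : ℂ, x = a 3 * (r m - r (m + 3)) - β * a 2 - γ * a 1 := ⟨_, rfl⟩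
  obtain ⟨Q, hQ⟩ : ∃ q : Polynomial ℂ,
      q = X * P (m + 3) - C α * P (m + 4) - C β * P (m + 3) - C γ * P (m + 2) - C δ * P (m + 1) :=
    ⟨_, rfl⟩
  -- coefficient formula for Q at s+1
  have hQc : ∀ s : ℕ, Q.coeff (s + 1)
      = (if s ≤ m + 3 then a (m + 3 - s) * b s else 0)
        - α * (if s + 1 ≤ m + 4 then a (m + 4 - (s + 1)) * b (s + 1) else 0)
        - β * (if s + 1 ≤ m + 3 then a (m + 3 - (s + 1)) * b (s + 1) else 0)
        - γ * (if s + 1 ≤ m + 2 then a (m + 2 - (s + 1)) * b (s + 1) else 0)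
        - δ * (if s + 1 ≤ m + 1 then a (m + 1 - (s + 1)) * b (s + 1) else 0) := by
    intro s
    rw [hQ]
    simp only [coeff_sub, coeff_C_mul, coeff_X_mul, coeff_P a b P hP]
  have hdeg : Q.natDegree ≤ m := by
    rw [Polynomial.natDegree_le_iff_coeff_eq_zero]
    intro t ht
    obtain ⟨s, rfl⟩ : ∃ s, t = s + 1 := ⟨t - 1, by omega⟩
    rw [hQc s]
    rcases (by omega : s = m ∨ s = m + 1 ∨ s = m + 2 ∨ s = m + 3 ∨ m + 4 ≤ s)
      with h | h | h | h | h
    · rw [h]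
      rw [if_pos (by omega), if_pos (by omega), if_pos (by omega), if_pos (by omega),
        if_pos (by omega)]
      rw [show m + 3 - m = 3 from by omega, show m + 4 - (m + 1) = 3 from by omega,
        show m + 3 - (m + 1) = 2 from by omega, show m + 2 - (m + 1) = 1 from by omega,
        show m + 1 - (m + 1) = 0 from by omega]
      rw [hδ, hγ, hβ, hα, hr m, hr (m + 1), hr (m + 2), hr (m + 3), ha0]
      field_simp [hb (m + 1), hb (m + 2), hb (m + 3), hb (m + 4)]
      ring
    · subst h
      rw [if_pos (by omega), if_pos (by omega), if_pos (by omega), if_pos (by omega),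
        if_neg (by omega)]
      rw [show m + 3 - (m + 1) = 2 from by omega, show m + 4 - (m + 1 + 1) = 2 from by omega,
        show m + 3 - (m + 1 + 1) = 1 from by omega, show m + 2 - (m + 1 + 1) = 0 from by omega]
      rw [hγ, hβ, hα, hr (m + 1), hr (m + 2), hr (m + 3), ha0]
      field_simp [hb (m + 2), hb (m + 3), hb (m + 4)]
      ring
    · subst h
      rw [if_pos (by omega), if_pos (by omega), if_pos (by omega), if_neg (by omega),
        if_neg (by omega)]
      rw [show m + 3 - (m + 2) = 1 from by omega, show m + 4 - (m + 2 + 1) = 1 from by omega,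
        show m + 3 - (m + 2 + 1) = 0 from by omega]
      rw [hβ, hα, hr (m + 2), hr (m + 3), ha0]
      field_simp [hb (m + 3), hb (m + 4)]
      ring
    · subst h
      rw [if_pos (by omega), if_pos (by omega), if_neg (by omega), if_neg (by omega),
        if_neg (by omega)]
      rw [show m + 3 - (m + 3) = 0 from by omega, show m + 4 - (m + 3 + 1) = 0 from by omega]
      rw [hα, hr (m + 3), ha0]
      field_simp [hb (m + 4)]
      ring
    · rw [if_neg (by omega), if_neg (by omega), if_neg (by omega), if_neg (by omega),
        if_neg (by omega)]
      ring
  obtain ⟨c, hcQ⟩ := expand_P a b ha0 hb0 hb P hP m Q hdeg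
  -- u applied to X^mq * Q, two ways
  have expand_u : ∀ (k : Fin 2) (mq : ℕ), u k ((X : Polynomial ℂ) ^ mq * Q)
      = u k (X ^ (mq + 1) * P (m + 3)) - α * u k (X ^ mq * P (m + 4))
        - β * u k (X ^ mq * P (m + 3)) - γ * u k (X ^ mq * P (m + 2))
        - δ * u k (X ^ mq * P (m + 1)) := by
    intro k mq
    have e : (X : Polynomial ℂ) ^ mq * Q
        = X ^ (mq + 1) * P (m + 3) - α • (X ^ mq * P (m + 4)) - β • (X ^ mq * P (m + 3))
          - γ • (X ^ mq * P (m + 2)) - δ • (X ^ mq * P (m + 1)) := by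
      rw [hQ]
      simp only [smul_eq_C_mul]
      ring
    rw [e]
    simp only [map_sub, map_smul, smul_eq_mul]
  have sum_u : ∀ (k : Fin 2) (mq : ℕ), u k ((X : Polynomial ℂ) ^ mq * Q)
      = ∑ i ∈ Finset.range (m + 1), c i * u k (X ^ mq * P i) := by
    intro k mq
    have e : (X : Polynomial ℂ) ^ mq * Q
        = ∑ i ∈ Finset.range (m + 1), c i • (X ^ mq * P i) := by
      rw [hcQ, Finset.mul_sum]
      refine Finset.sum_congr rfl fun i _ => ?_
      rw [smul_eq_C_mul]
      ring
    rw [e, map_sum]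
    simp only [map_smul, smul_eq_mul]
  -- all expansion coefficients vanish
  have key : ∀ j, j ≤ m → c j = 0 := by
    intro j
    induction j using Nat.strong_induction_on with
    | _ j ih =>
      intro hj
      obtain ⟨k, hk⟩ : ∃ k : Fin 2, (k : ℕ) = j % 2 := ⟨⟨j % 2, by omega⟩, rfl⟩
      obtain ⟨mq, hmq⟩ : ∃ x : ℕ, x = j / 2 := ⟨_, rfl⟩
      have hjk : mq * 2 + (k : ℕ) = j := by omega
      have h1 : u k ((X : Polynomial ℂ) ^ mq * Q) = 0 := by
        rw [expand_u k mq, (hu k).1 (mq + 1) (m + 3) (by omega),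
          (hu k).1 mq (m + 4) (by omega), (hu k).1 mq (m + 3) (by omega),
          (hu k).1 mq (m + 2) (by omega), (hu k).1 mq (m + 1) (by omega)]
        ring
      have h2 : u k ((X : Polynomial ℂ) ^ mq * Q) = c j * u k (X ^ mq * P j) := by
        rw [sum_u k mq, Finset.sum_eq_single j]
        · intro i hi hij
          rw [Finset.mem_range, Nat.lt_succ_iff] at hi
          rcases Nat.lt_or_ge i j with h | h
          · rw [ih i h (le_trans (le_of_lt h) hj)]
            ring
          · rw [(hu k).1 mq i (by omega)]
            ring
        · intro hj'
          exact absurd (Finset.mem_range.mpr (by omega)) hj'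
      have h3 : u k ((X : Polynomial ℂ) ^ mq * P j) ≠ 0 := by
        have := (hu k).2 mq
        rwa [hjk] at this
      rw [h1] at h2
      exact (mul_eq_zero.mp h2.symm).resolve_right h3
  have hQ0 : Q = 0 := by
    rw [hcQ, Finset.sum_eq_zero]
    intro i hi
    rw [Finset.mem_range, Nat.lt_succ_iff] at hi
    rw [key i hi]
    simp
  -- δ ≠ 0
  have hδne : δ ≠ 0 := by
    obtain ⟨k, hk⟩ : ∃ k : Fin 2, (k : ℕ) = (m + 1) % 2 := ⟨⟨(m + 1) % 2, by omega⟩, rfl⟩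
    obtain ⟨mq, hmq⟩ : ∃ x : ℕ, x = (m + 1) / 2 := ⟨_, rfl⟩
    have hjk : mq * 2 + (k : ℕ) = m + 1 := by omega
    have h1 : u k ((X : Polynomial ℂ) ^ mq * Q) = 0 := by
      rw [hQ0, mul_zero, map_zero]
    rw [expand_u k mq, (hu k).1 mq (m + 4) (by omega), (hu k).1 mq (m + 3) (by omega),
      (hu k).1 mq (m + 2) (by omega)] at h1
    have h2 : u k ((X : Polynomial ℂ) ^ (mq + 1) * P (m + 3)) ≠ 0 := by
      have := (hu k).2 (mq + 1)
      rwa [show (mq + 1) * 2 + (k : ℕ) = m + 3 from by omega] at this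
    have h4 : δ * u k ((X : Polynomial ℂ) ^ mq * P (m + 1))
        = u k ((X : Polynomial ℂ) ^ (mq + 1) * P (m + 3)) := by
      linear_combination -h1
    intro hδ0
    rw [hδ0, zero_mul] at h4
    exact h2 h4.symm
  constructor
  · -- Statement 1: the vanishing identity, from coeff Q (m) = 0
    have hcm : Q.coeff m = 0 := by rw [hQ0]; simp
    simp only [show m + 3 - 1 = m + 2 from rfl, show m + 3 - 2 = m + 1 from rfl,
      show m + 3 - 3 = m from rfl]
    rcases Nat.eq_zero_or_pos m with hm0 | hm1
    · subst hm0
      rw [hQ] at hcm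
      simp only [coeff_sub, coeff_C_mul, Polynomial.mul_coeff_zero, coeff_X_zero, zero_mul,
        coeff_P a b P hP] at hcm
      norm_num at hcm
      rw [hb0] at hcm
      rw [hΔ 2, hΔ 1, hΔ 0, hΔ0]
      rw [hδ, hγ, hβ, hα] at hcm
      norm_num at hcm ⊢
      linear_combination -hcm
    · obtain ⟨m', rfl⟩ : ∃ m', m = m' + 1 := ⟨m - 1, by omega⟩
      rw [hQc m'] at hcm
      rw [if_pos (by omega), if_pos (by omega), if_pos (by omega), if_pos (by omega),
        if_pos (by omega)] at hcm
      rw [show m' + 1 + 3 - m' = 4 from by omega, show m' + 1 + 4 - (m' + 1) = 4 from by omega,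
        show m' + 1 + 3 - (m' + 1) = 3 from by omega,
        show m' + 1 + 2 - (m' + 1) = 2 from by omega,
        show m' + 1 + 1 - (m' + 1) = 1 from by omega] at hcm
      have hE : a 4 * r m' = α * a 4 + β * a 3 + γ * a 2 + δ * a 1 := by
        rw [hr m']
        field_simp [hb (m' + 1)]
        linear_combination hcm
      rw [hΔ (m' + 3), hΔ (m' + 2), hΔ (m' + 1), hΔ m']
      rw [hδ, hγ, hβ, hα] at hE
      simp only [show m' + 3 + 1 = m' + 4 from by omega, show m' + 2 + 1 = m' + 3 from by omega,
        show m' + 1 + 1 = m' + 2 from by omega, show m' + 1 + 3 = m' + 4 from by omega,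
        show m' + 1 + 2 = m' + 3 from by omega] at hE ⊢
      linear_combination -hE
  · -- Statement 2: δ ≠ 0
    simp only [show m + 3 - 1 = m + 2 from rfl, show m + 3 - 2 = m + 1 from rfl]
    have he : ((a 1) ^ 3 - 2 * a 1 * a 2 + a 3) * Δ (m + 3)
        + (a 3 - a 1 * a 2) * Δ (m + 2) + a 3 * Δ (m + 1) = -δ := by
      rw [hΔ (m + 2), hΔ (m + 1), hΔ m, hδ, hγ, hβ]
      ring
    rw [he]
    exact neg_ne_zero.mpr hδne
end

section
/- Let {P_n} be the Brenke polynomial sequence associated with (a_k) and (b_k), and suppose {P_n} is a d-orthogonal polynomial set for some integer d ≥ 1. Then (d+1) consecutive numbers Δ_n cannot all vanish, i.e. for every n ≥ 0 the numbers Δ_n, Δ_{n+1}, …, Δ_{n+d} are not all zero; and likewise (d+1) consecutive coefficients a_n cannot all vanish, i.e. for every n ≥ 0 the numbers a_n, a_{n+1}, …, a_{n+d} are not all zero. -/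
open Finset Polynomial


lemma coeffP (a b : ℕ → ℂ) (P : ℕ → Polynomial ℂ)
    (hP : ∀ n, P n = ∑ k ∈ Finset.range (n + 1), Polynomial.C (a (n - k) * b k) * X ^ k)
    (j t : ℕ) : (P j).coeff t = if t ≤ j then a (j - t) * b t else 0 := by
  rw [hP, Polynomial.finset_sum_coeff]
  simp only [Polynomial.coeff_C_mul, Polynomial.coeff_X_pow, mul_ite, mul_one, mul_zero]
  simp [Finset.sum_ite_eq, Nat.lt_succ_iff]

lemma expandP (a b : ℕ → ℂ) (ha0 : a 0 = 1) (hb0 : b 0 = 1) (hb : ∀ k, b k ≠ 0)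
    (P : ℕ → Polynomial ℂ)
    (hP : ∀ n, P n = ∑ k ∈ Finset.range (n + 1), Polynomial.C (a (n - k) * b k) * X ^ k) :
    ∀ M (Q : Polynomial ℂ), Q.natDegree ≤ M →
      ∃ c : ℕ → ℂ, Q = ∑ j ∈ Finset.range (M + 1), Polynomial.C (c j) * P j := by
  intro M
  induction M with
  | zero =>
    intro Q hQ
    refine ⟨fun _ => Q.coeff 0, ?_⟩
    rw [Polynomial.eq_C_of_natDegree_le_zero hQ]
    simp [hP 0, ha0, hb0]
  | succ M ih =>
    intro Q hQ
    set q : ℂ := Q.coeff (M + 1) / b (M + 1) with hq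
    have hQ' : (Q - Polynomial.C q * P (M + 1)).natDegree ≤ M := by
      rw [Polynomial.natDegree_le_iff_coeff_eq_zero]
      intro t ht
      rw [Polynomial.coeff_sub, Polynomial.coeff_C_mul, coeffP a b P hP]
      rcases eq_or_lt_of_le (Nat.succ_le_of_lt ht) with h | h
      · rw [← h]
        simp only [le_refl, if_pos, Nat.sub_self, ha0, one_mul, hq]
        rw [div_mul_cancel₀ _ (hb (M+1))]; exact sub_self _
      · rw [if_neg (by omega)]
        rw [Polynomial.coeff_eq_zero_of_natDegree_lt (lt_of_le_of_lt hQ h)]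
        ring
    obtain ⟨c, hc⟩ := ih _ hQ'
    refine ⟨Function.update c (M + 1) q, ?_⟩
    rw [Finset.sum_range_succ, Function.update_self]
    have : ∑ j ∈ Finset.range (M + 1), Polynomial.C (Function.update c (M + 1) q j) * P j
        = ∑ j ∈ Finset.range (M + 1), Polynomial.C (c j) * P j := by
      apply Finset.sum_congr rfl
      intro j hj
      rw [Function.update_of_ne (by simp at hj; omega)]
    rw [this, ← hc]
    ring


/-- For a `d`-orthogonal Brenke polynomial sequence, `d+1` consecutive
numbers `Δ_n` cannot all vanish, and `d+1` consecutive coefficients `a_n` cannot all vanish. -/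
theorem brenke_d_orthogonal_no_consecutive_zeros
    (a b : ℕ → ℂ) (ha0 : a 0 = 1) (hb0 : b 0 = 1) (hb : ∀ k, b k ≠ 0)
    (P : ℕ → Polynomial ℂ)
    (hP : ∀ n, P n = ∑ k ∈ Finset.range (n + 1), Polynomial.C (a (n - k) * b k) * X ^ k)
    (d : ℕ) (hd : 1 ≤ d)
    (horth : ∃ u : Fin d → (Polynomial ℂ →ₗ[ℂ] ℂ),
      ∀ k : Fin d,
        (∀ m n : ℕ, n > m * d + (k : ℕ) → u k (X ^ m * P n) = 0) ∧
        (∀ m : ℕ, u k (X ^ m * P (m * d + (k : ℕ))) ≠ 0))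
    (r : ℕ → ℂ) (hr : ∀ n, r n = b n / b (n + 1))
    (Δ : ℕ → ℂ) (hΔ0 : Δ 0 = r 0) (hΔ : ∀ n, Δ (n + 1) = r (n + 1) - r n) :
    ∀ n : ℕ,
      (¬ ∀ i : ℕ, i ≤ d → Δ (n + i) = 0) ∧ (¬ ∀ i : ℕ, i ≤ d → a (n + i) = 0) := by
  classical
  obtain ⟨u, hu⟩ := horth
  have hd0 : 0 < d := hd
  have hrne : ∀ m, r m ≠ 0 := fun m => by
    rw [hr]; exact div_ne_zero (hb m) (hb (m + 1))
  have hbr : ∀ m, b m = r m * b (m + 1) := fun m => by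
    rw [hr, div_mul_cancel₀ _ (hb (m + 1))]
  have ulin : ∀ (k : Fin d) (ρ : ℂ) (p : Polynomial ℂ),
      u k (Polynomial.C ρ * p) = ρ * u k p := by
    intro k ρ p
    rw [← Polynomial.smul_eq_C_mul, map_smul, smul_eq_mul]
  have hdegP : ∀ j, (P j).natDegree ≤ j := by
    intro j
    rw [Polynomial.natDegree_le_iff_coeff_eq_zero]
    intro t ht
    rw [coeffP a b P hP, if_neg (by omega)]
  -- coefficient extraction from a decomposition
  have Ecoeff : ∀ N (c : ℕ → ℂ),
      X * P N = ∑ j ∈ Finset.range (N + 2), Polynomial.C (c j) * P j →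
      ∀ s, (X * P N).coeff s
        = ∑ j ∈ Finset.range (N + 2), c j * (if s ≤ j then a (j - s) * b s else 0) := by
    intro N c hc s
    rw [hc, Polynomial.finset_sum_coeff]
    exact Finset.sum_congr rfl fun j _ => by
      rw [Polynomial.coeff_C_mul, coeffP a b P hP]
  -- THE RECURRENCE
  have recur : ∀ N, d ≤ N → ∃ c : ℕ → ℂ,
      (X * P N = ∑ j ∈ Finset.range (N + 2), Polynomial.C (c j) * P j) ∧
      (∀ j, j < N - d → c j = 0) ∧ c (N + 1) = r N ∧ c (N - d) ≠ 0 := by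
    intro N hN
    have hdeg : (X * P N).natDegree ≤ N + 1 := by
      refine le_trans (Polynomial.natDegree_mul_le) ?_
      rw [Polynomial.natDegree_X]
      have := hdegP N
      omega
    obtain ⟨c, hc⟩ := expandP a b ha0 hb0 hb P hP (N + 1) _ hdeg
    have happ : ∀ (k : Fin d) (m : ℕ),
        u k (X ^ (m + 1) * P N)
          = ∑ j ∈ Finset.range (N + 2), c j * u k (X ^ m * P j) := by
      intro k m
      have h1 : X ^ (m + 1) * P N
          = ∑ j ∈ Finset.range (N + 2), Polynomial.C (c j) * (X ^ m * P j) := by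
        rw [pow_succ, mul_assoc, hc, Finset.mul_sum]
        exact Finset.sum_congr rfl fun j _ => by ring
      rw [h1, map_sum]
      exact Finset.sum_congr rfl fun j _ => ulin k _ _
    have hvan : ∀ j, j < N - d → c j = 0 := by
      intro j
      induction j using Nat.strong_induction_on with
      | _ j IH =>
        intro hj
        set k : ℕ := j % d with hk'
        set m : ℕ := j / d with hm'
        have hk : k < d := Nat.mod_lt _ hd0
        have hdm : m * d + k = j := by rw [mul_comm]; exact Nat.div_add_mod j d
        have h1 := happ ⟨k, hk⟩ m
        have hlhs : u ⟨k, hk⟩ (X ^ (m + 1) * P N) = 0 := by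
          refine (hu ⟨k, hk⟩).1 (m + 1) N ?_
          simp only [Fin.val_mk]
          have : (m + 1) * d + k = j + d := by rw [add_mul, one_mul]; omega
          omega
        rw [hlhs] at h1
        have hsum : ∑ i ∈ Finset.range (N + 2), c i * u ⟨k, hk⟩ (X ^ m * P i)
            = c j * u ⟨k, hk⟩ (X ^ m * P j) := by
          apply Finset.sum_eq_single
          · intro i hi hne
            rcases lt_or_gt_of_ne hne with h | h
            · rw [IH i h (by omega), zero_mul]
            · rw [(hu ⟨k, hk⟩).1 m i (by simp only [Fin.val_mk]; omega), mul_zero]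
          · intro hni
            exact absurd (Finset.mem_range.mpr (by omega)) hni
        rw [hsum] at h1
        have hne := (hu ⟨k, hk⟩).2 m
        simp only [Fin.val_mk] at hne
        rw [hdm] at hne
        exact (mul_eq_zero.mp h1.symm).resolve_right hne
    have hcN1 : c (N + 1) = r N := by
      have hE := Ecoeff N c hc (N + 1)
      rw [Polynomial.coeff_X_mul] at hE
      rw [coeffP a b P hP, if_pos (le_refl N), Nat.sub_self, ha0, one_mul] at hE
      have hsum : ∑ j ∈ Finset.range (N + 2),
          c j * (if N + 1 ≤ j then a (j - (N + 1)) * b (N + 1) else 0)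
          = c (N + 1) * b (N + 1) := by
        rw [Finset.sum_eq_single (N + 1)]
        · rw [if_pos (le_refl _), Nat.sub_self, ha0, one_mul]
        · intro i hi hne
          rw [if_neg (by simp at hi; omega), mul_zero]
        · intro hni
          exact absurd (Finset.mem_range.mpr (by omega)) hni
      rw [hsum] at hE
      rw [hr, hE, mul_div_assoc, div_self (hb (N + 1)), mul_one]
    refine ⟨c, hc, hvan, hcN1, ?_⟩
    -- c (N - d) ≠ 0
    set j : ℕ := N - d with hj'
    set k : ℕ := j % d with hk'
    set m : ℕ := j / d with hm'
    have hk : k < d := Nat.mod_lt _ hd0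
    have hdm : m * d + k = j := by rw [mul_comm]; exact Nat.div_add_mod j d
    have h1 := happ ⟨k, hk⟩ m
    have hlhs : u ⟨k, hk⟩ (X ^ (m + 1) * P N) ≠ 0 := by
      have hne := (hu ⟨k, hk⟩).2 (m + 1)
      simp only [Fin.val_mk] at hne ⊢
      have heq : (m + 1) * d + k = N := by
        have : (m + 1) * d + k = j + d := by rw [add_mul, one_mul]; omega
        omega
      rwa [heq] at hne
    have hsum : ∑ i ∈ Finset.range (N + 2), c i * u ⟨k, hk⟩ (X ^ m * P i)
        = c j * u ⟨k, hk⟩ (X ^ m * P j) := by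
      apply Finset.sum_eq_single
      · intro i hi hne
        rcases lt_or_gt_of_ne hne with h | h
        · rw [hvan i (by omega), zero_mul]
        · rw [(hu ⟨k, hk⟩).1 m i (by simp only [Fin.val_mk]; omega), mul_zero]
      · intro hni
        exact absurd (Finset.mem_range.mpr (by omega)) hni
    rw [hsum] at h1
    intro hc0
    rw [hc0, zero_mul] at h1
    exact hlhs h1
  intro n
  constructor
  · -- Δ claim
    intro h
    rcases Nat.eq_zero_or_pos n with rfl | hn
    · have h0 : r 0 = 0 := by
        have := h 0 (Nat.zero_le d); simpa [hΔ0] using this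
      exact hrne 0 h0
    · obtain ⟨n₀, rfl⟩ : ∃ n₀, n = n₀ + 1 := ⟨n - 1, by omega⟩
      have hwin : ∀ i, i ≤ d + 1 → r (n₀ + i) = r n₀ := by
        intro i
        induction i with
        | zero => intro _; rfl
        | succ i IH =>
          intro hi
          have h1 := h i (by omega)
          rw [show n₀ + 1 + i = (n₀ + i) + 1 by ring, hΔ (n₀ + i)] at h1
          rw [sub_eq_zero] at h1
          rw [show n₀ + (i + 1) = n₀ + i + 1 by ring, h1]
          exact IH (by omega)
      set N := n₀ + 1 + d with hN'
      obtain ⟨c, hc, hvan, hcN1, hcNd⟩ := recur N (by omega)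
      have hcN1' : c (N + 1) = r n₀ := by
        rw [hcN1, show N = n₀ + (d + 1) by omega]
        exact hwin (d + 1) (le_refl _)
      have hzero : ∀ i, 1 ≤ i → i ≤ d + 1 → c (N + 1 - i) = 0 := by
        intro i
        induction i using Nat.strong_induction_on with
        | _ i IH =>
          intro hi1 hi2
          have hE := Ecoeff N c hc (N - i + 1)
          rw [Polynomial.coeff_X_mul, coeffP a b P hP, if_pos (by omega : N - i ≤ N)] at hE
          rw [show N - (N - i) = i by omega] at hE
          rw [hbr (N - i)] at hE
          rw [show r (N - i) = r n₀ from by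
            rw [show N - i = n₀ + (d + 1 - i) by omega]; exact hwin _ (by omega)] at hE
          have hsum : ∑ j ∈ Finset.range (N + 2),
              c j * (if N - i + 1 ≤ j then a (j - (N - i + 1)) * b (N - i + 1) else 0)
              = c (N + 1 - i) * b (N - i + 1) + c (N + 1) * (a i * b (N - i + 1)) := by
            rw [Finset.sum_range_succ]
            congr 1
            · rw [Finset.sum_eq_single (N + 1 - i)]
              · rw [if_pos (by omega), show N + 1 - i - (N - i + 1) = 0 by omega, ha0, one_mul]
              · intro j hj hne
                simp only [Finset.mem_range] at hj
                rcases lt_or_gt_of_ne hne with hlt | hgt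
                · rw [if_neg (by omega), mul_zero]
                · have hcj : c j = 0 := by
                    have := IH (N + 1 - j) (by omega) (by omega) (by omega)
                    rwa [show N + 1 - (N + 1 - j) = j by omega] at this
                  rw [hcj, zero_mul]
              · intro hni; exact absurd (Finset.mem_range.mpr (by omega)) hni
            · rw [if_pos (by omega), show N + 1 - (N - i + 1) = i by omega]
          rw [hsum, hcN1'] at hE
          have h0 : c (N + 1 - i) * b (N - i + 1) = 0 := by linear_combination -hE
          exact (mul_eq_zero.mp h0).resolve_right (hb _)
      have hfin := hzero (d + 1) (by omega) (le_refl _)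
      rw [show N + 1 - (d + 1) = N - d by omega] at hfin
      exact hcNd hfin
  · -- a claim
    intro h
    have hn : 1 ≤ n := by
      by_contra hn
      have h0 := h 0 (Nat.zero_le d)
      rw [show n = 0 by omega] at h0
      simp only [Nat.add_zero] at h0
      exact one_ne_zero (ha0 ▸ h0)
    have hall : ∀ j, n ≤ j → a j = 0 := by
      intro j
      induction j using Nat.strong_induction_on with
      | _ j IH =>
        intro hj
        rcases le_or_gt j (n + d) with hle | hlt
        · have := h (j - n) (by omega)
          rwa [show n + (j - n) = j by omega] at this
        · obtain ⟨c, hc, hvan, hcN1, hcNd⟩ := recur (j - 1) (by omega)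
          have hE := Ecoeff (j - 1) c hc 0
          have hL : (X * P (j - 1)).coeff 0 = 0 := by
            rw [Polynomial.mul_coeff_zero, Polynomial.coeff_X_zero, zero_mul]
          rw [hL] at hE
          have hsum : ∑ i ∈ Finset.range (j - 1 + 2),
              c i * (if 0 ≤ i then a (i - 0) * b 0 else 0)
              = c (j - 1 + 1) * a j := by
            rw [Finset.sum_eq_single (j - 1 + 1)]
            · rw [if_pos (Nat.zero_le _), Nat.sub_zero, hb0, mul_one,
                show j - 1 + 1 = j by omega]
            · intro i hi hne
              simp only [Finset.mem_range] at hi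
              rw [if_pos (Nat.zero_le _), Nat.sub_zero, hb0, mul_one]
              rcases lt_or_ge i (j - 1 - d) with hlt2 | hge
              · rw [hvan i hlt2, zero_mul]
              · rw [IH i (by omega) (by omega), mul_zero]
            · intro hni; exact absurd (Finset.mem_range.mpr (by omega)) hni
          rw [hsum, hcN1] at hE
          exact ((mul_eq_zero.mp hE.symm).resolve_left (hrne _))
    have hex : ∃ m, ∀ j, m ≤ j → a j = 0 := ⟨n, hall⟩
    have hQ := Nat.find_spec hex
    set n' := Nat.find hex with hn'
    have hn'pos : 0 < n' := by
      rcases Nat.eq_zero_or_pos n' with h0 | h1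
      · exact absurd (ha0 ▸ hQ 0 (by omega)) one_ne_zero
      · exact h1
    have han₀ : a (n' - 1) ≠ 0 := by
      intro h0
      have hQ' : ∀ j, n' - 1 ≤ j → a j = 0 := by
        intro j hj
        rcases eq_or_lt_of_le hj with he | hlt
        · rw [← he]; exact h0
        · exact hQ j (by omega)
      exact Nat.find_min hex (by omega) hQ'
    obtain ⟨c, hc, hvan, hcN1, hcNd⟩ := recur (d + n') (by omega)
    have hE := Ecoeff (d + n') c hc 1
    have hXc : (X * P (d + n')).coeff 1 = (P (d + n')).coeff 0 := by
      exact Polynomial.coeff_X_mul (P (d + n')) 0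
    rw [hXc] at hE
    rw [coeffP a b P hP, if_pos (Nat.zero_le _), Nat.sub_zero, hb0, mul_one] at hE
    rw [hQ (d + n') (by omega)] at hE
    have hsum : ∑ j ∈ Finset.range (d + n' + 2),
        c j * (if 1 ≤ j then a (j - 1) * b 1 else 0) = c n' * (a (n' - 1) * b 1) := by
      rw [Finset.sum_eq_single n']
      · rw [if_pos (by omega)]
      · intro i hi hne
        rcases Nat.eq_zero_or_pos i with rfl | hipos
        · rw [if_neg (by omega), mul_zero]
        · rcases lt_or_gt_of_ne hne with hlt | hgt
          · rw [hvan i (by omega), zero_mul]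
          · rw [if_pos (by omega), hQ (i - 1) (by omega), zero_mul, mul_zero]
      · intro hni; exact absurd (Finset.mem_range.mpr (by omega)) hni
    rw [hsum] at hE
    rcases mul_eq_zero.mp hE.symm with h1 | h2
    · exact hcNd (by rw [show d + n' - d = n' by omega]; exact h1)
    · rcases mul_eq_zero.mp h2 with h3 | h4
      · exact han₀ h3
      · exact hb 1 h4
end

section
/- Let {P_n} be the Brenke polynomial sequence associated with (a_k) and (b_k), and let m ≥ 1 be an integer. Then {P_n} is (m+1)-fold symmetric (P_n(w·x) = wⁿ·P_n(x) for all n ≥ 0 and all x ∈ ℂ, where w = exp(2πi/(m+1))) if and only if a_k = 0 for every index k that is not divisible by m+1. -/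
open Finset Polynomial Complex

/-- A Brenke polynomial sequence is `(m+1)`-fold symmetric if and only if
`a_k = 0` for every index `k` not divisible by `m+1`. -/
theorem brenke_fold_symmetric_iff_coeffs_vanish
    (a b : ℕ → ℂ) (ha0 : a 0 = 1) (hb0 : b 0 = 1) (hb : ∀ k, b k ≠ 0)
    (P : ℕ → Polynomial ℂ)
    (hP : ∀ n, P n = ∑ k ∈ Finset.range (n + 1), Polynomial.C (a (n - k) * b k) * X ^ k)
    (m : ℕ) (hm : 1 ≤ m)
    (w : ℂ) (hw : w = Complex.exp (2 * Real.pi * Complex.I / (m + 1))) :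
    (∀ (n : ℕ) (x : ℂ), (P n).eval (w * x) = w ^ n * (P n).eval x)
      ↔ (∀ k : ℕ, ¬ (m + 1) ∣ k → a k = 0) := by
  have hprim : IsPrimitiveRoot w (m + 1) := by
    rw [hw]
    have := Complex.isPrimitiveRoot_exp (m + 1) (Nat.succ_ne_zero m)
    convert this using 3
    push_cast; ring
  have heval0 : ∀ j, (P j).eval 0 = a j := by
    intro j
    rw [hP, Polynomial.eval_finset_sum]
    rw [Finset.sum_eq_single 0]
    · simp [hb0]
    · intro k _ hk; simp [zero_pow hk]
    · intro h; simp at h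
  constructor
  · intro hsym j hj
    have h0 := hsym j 0
    rw [mul_zero, heval0] at h0
    have hwj : w ^ j ≠ 1 := fun h => hj (hprim.dvd_of_pow_eq_one j h)
    have hz : (w ^ j - 1) * a j = 0 := by linear_combination -h0
    rcases mul_eq_zero.mp hz with h | h
    · exact absurd (by linear_combination h) hwj
    · exact h
  · intro h n x
    rw [hP]
    simp only [Polynomial.eval_finset_sum, Polynomial.eval_mul, Polynomial.eval_pow,
      Polynomial.eval_C, Polynomial.eval_X, Finset.mul_sum]
    apply Finset.sum_congr rfl
    intro k hk
    rw [Finset.mem_range, Nat.lt_succ_iff] at hk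
    by_cases hd : (m + 1) ∣ (n - k)
    · have hwn : w ^ n = w ^ k := by
        obtain ⟨c, hc⟩ := hd
        have hn : n = k + (m + 1) * c := by omega
        rw [hn, pow_add, pow_mul, hprim.pow_eq_one, one_pow, mul_one]
      rw [mul_pow, hwn]; ring
    · rw [h _ hd]; ring
end

section
/- Let A(t) = ∑_{k≥0} a_k t^k be a formal power series over ℂ with a_0 = 1, and let q ∈ ℂ with q ≠ 0. Suppose that, as formal power series, A(t) = A(qt)·(1 + a_2(1−q²)t² + a_3(1−q³)t³) and A(t) = A(−qt)·(1 + a_2(1−q²)t² + a_3(1+q³)t³), where a_2 and a_3 are the coefficients of A itself. Then a_3 = 0. -/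
open PowerSeries

lemma coeff6_aux (A : PowerSeries ℂ) (r c2 c3 : ℂ) :
    PowerSeries.coeff 6 (PowerSeries.rescale r A
      * (1 + PowerSeries.C c2 * (PowerSeries.X : PowerSeries ℂ) ^ 2
          + PowerSeries.C c3 * (PowerSeries.X : PowerSeries ℂ) ^ 3))
    = r^6 * coeff 6 A + c2 * (r^4 * coeff 4 A) + c3 * (r^3 * coeff 3 A) := by
  rw [mul_add, mul_add, mul_one, map_add, map_add, coeff_rescale]
  rw [show PowerSeries.rescale r A * (PowerSeries.C c2 * X^2)
      = PowerSeries.C c2 * (PowerSeries.rescale r A * X^2) by ring]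
  rw [show PowerSeries.rescale r A * (PowerSeries.C c3 * X^3)
      = PowerSeries.C c3 * (PowerSeries.rescale r A * X^3) by ring]
  rw [coeff_C_mul, coeff_C_mul, show (6:ℕ) = 4+2 from rfl, coeff_mul_X_pow]
  rw [show (4+2:ℕ) = 3+3 from rfl, coeff_mul_X_pow, coeff_rescale, coeff_rescale]

/-- If `A(t) = A(qt)(1 + a₂(1−q²)t² + a₃(1−q³)t³)` and
`A(t) = A(−qt)(1 + a₂(1−q²)t² + a₃(1+q³)t³)` for `q ≠ 0`, then `a₃ = 0`. -/
theorem two_rescaling_relations_force_a3_zero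
    (A : PowerSeries ℂ) (hA0 : PowerSeries.constantCoeff A = 1)
    (q : ℂ) (hq : q ≠ 0)
    (a2 a3 : ℂ) (ha2 : a2 = PowerSeries.coeff 2 A) (ha3 : a3 = PowerSeries.coeff 3 A)
    (h1 : A = PowerSeries.rescale q A
      * (1 + PowerSeries.C (a2 * (1 - q ^ 2)) * (PowerSeries.X : PowerSeries ℂ) ^ 2
          + PowerSeries.C (a3 * (1 - q ^ 3)) * (PowerSeries.X : PowerSeries ℂ) ^ 3))
    (h2 : A = PowerSeries.rescale (-q) A
      * (1 + PowerSeries.C (a2 * (1 - q ^ 2)) * (PowerSeries.X : PowerSeries ℂ) ^ 2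
          + PowerSeries.C (a3 * (1 + q ^ 3)) * (PowerSeries.X : PowerSeries ℂ) ^ 3)) :
    a3 = 0 := by
  have e1 : PowerSeries.coeff 6 A
      = q^6 * coeff 6 A + (a2 * (1 - q^2)) * (q^4 * coeff 4 A)
        + (a3 * (1 - q^3)) * (q^3 * coeff 3 A) := by
    conv_lhs => rw [h1]
    exact coeff6_aux A q _ _
  have e2 : PowerSeries.coeff 6 A
      = (-q)^6 * coeff 6 A + (a2 * (1 - q^2)) * ((-q)^4 * coeff 4 A)
        + (a3 * (1 + q^3)) * ((-q)^3 * coeff 3 A) := by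
    conv_lhs => rw [h2]
    exact coeff6_aux A (-q) _ _
  rw [← ha3] at e1 e2
  have key : 2 * q^3 * a3^2 = 0 := by
    linear_combination e2 - e1
  have h2q : (2:ℂ) * q^3 ≠ 0 := mul_ne_zero two_ne_zero (pow_ne_zero _ hq)
  have : a3^2 = 0 := by
    rcases mul_eq_zero.mp key with h | h
    · exact absurd h h2q
    · exact h
  exact pow_eq_zero_iff (by norm_num) |>.mp this
end

section
/- Let a_1, a_2, a_3, a_4, q ∈ ℂ with q ≠ 0, q³ ≠ 1 and a_1 ≠ 0, let j = exp(2πi/3), set L = −a_1⁴ − 2a_1a_3 + 3a_1²a_2 − a_2² + a_4, and suppose L ≠ 0 and L·r³ + (a_1²a_2 − a_2² − a_1a_3 + a_4)·r² + (a_4 − a_1a_3)·r + a_4 = L·(r − q)(r − jq)(r − j̄q) identically in r. Then: if a_2 = 0 one has a_3 = q³a_1³/(1 − q³) and a_4 = q³a_1⁴/(1 − q³); and if a_2 = a_1² one has a_3 = q³a_1³/(q³ − 1) and a_4 = q³a_1⁴/(q³ − 1). -/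
open Complex

/-- With roots `q, jq, j̄q` of the characteristic cubic and `a₁ ≠ 0`,
`q³ ≠ 1`: if `a₂ = 0` then `a₃ = q³a₁³/(1−q³)`, `a₄ = q³a₁⁴/(1−q³)`;
if `a₂ = a₁²` then `a₃ = q³a₁³/(q³−1)`, `a₄ = q³a₁⁴/(q³−1)`. -/
theorem characteristic_roots_a3_a4_values
    (a1 a2 a3 a4 q : ℂ) (hq : q ≠ 0) (hq3 : q ^ 3 ≠ 1) (ha1 : a1 ≠ 0)
    (j : ℂ) (hj : j = Complex.exp (2 * Real.pi * Complex.I / 3))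
    (L : ℂ) (hL : L = -a1 ^ 4 - 2 * a1 * a3 + 3 * a1 ^ 2 * a2 - a2 ^ 2 + a4)
    (hLne : L ≠ 0)
    (hroots : ∀ r : ℂ,
      L * r ^ 3 + (a1 ^ 2 * a2 - a2 ^ 2 - a1 * a3 + a4) * r ^ 2
        + (a4 - a1 * a3) * r + a4
      = L * (r - q) * (r - j * q) * (r - j ^ 2 * q)) :
    (a2 = 0 → a3 = q ^ 3 * a1 ^ 3 / (1 - q ^ 3) ∧ a4 = q ^ 3 * a1 ^ 4 / (1 - q ^ 3)) ∧
    (a2 = a1 ^ 2 → a3 = q ^ 3 * a1 ^ 3 / (q ^ 3 - 1) ∧ a4 = q ^ 3 * a1 ^ 4 / (q ^ 3 - 1)) := by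
  have hj3 : j ^ 3 = 1 := by
    rw [hj, ← Complex.exp_nat_mul]
    rw [show (3 : ℕ) * (2 * (Real.pi : ℂ) * Complex.I / 3) = 2 * Real.pi * Complex.I by
      push_cast; ring]
    exact Complex.exp_two_pi_mul_I
  have hjne : j ≠ 1 := by
    rw [hj, Ne, Complex.exp_eq_one_iff]
    rintro ⟨n, hn⟩
    have h2pi : (2 : ℂ) * Real.pi * Complex.I ≠ 0 := by
      simp [Real.pi_ne_zero, Complex.I_ne_zero]
    have h3 : ((1 : ℤ) : ℂ) = ((n * 3 : ℤ) : ℂ) := by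
      push_cast
      exact mul_right_cancel₀ h2pi (by linear_combination 3 * hn :
        (1 : ℂ) * (2 * Real.pi * Complex.I) = (n : ℂ) * 3 * (2 * Real.pi * Complex.I))
    have := Int.cast_injective (α := ℂ) h3
    omega
  have he : 1 + j + j ^ 2 = 0 := by
    have : (j - 1) * (1 + j + j ^ 2) = 0 := by linear_combination hj3
    rcases mul_eq_zero.mp this with h | h
    · exact absurd (sub_eq_zero.mp h) hjne
    · exact h
  have h0 := hroots 0
  have h1 := hroots 1
  have hm1 := hroots (-1)
  have hC : a4 = -L * q ^ 3 := by
    linear_combination h0 - L * q ^ 3 * hj3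
  have hB : a4 = a1 * a3 := by
    linear_combination (h1 - hm1) / 2 + L * q ^ 2 * hj3 + L * q ^ 2 * he
  have hA : a1 ^ 2 * a2 - a2 ^ 2 - a1 * a3 + a4 = 0 := by
    linear_combination (h1 + hm1) / 2 - h0 - L * q * he
  have h1q : (1 : ℂ) - q ^ 3 ≠ 0 := by
    intro h; exact hq3 (by linear_combination -h)
  have hq1 : q ^ 3 - 1 ≠ 0 := by
    intro h; exact hq3 (by linear_combination h)
  constructor
  · intro h2
    subst h2
    have ha4 : a4 * (1 - q ^ 3) = q ^ 3 * a1 ^ 4 := by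
      rw [hL] at hC; linear_combination hC - 2 * q ^ 3 * hB
    have ha4' : a4 = q ^ 3 * a1 ^ 4 / (1 - q ^ 3) := by
      field_simp; linear_combination ha4
    refine ⟨?_, ha4'⟩
    field_simp
    have : a1 * a3 * (1 - q ^ 3) = q ^ 3 * a1 ^ 4 := by rw [← hB]; exact ha4
    field_simp at this
    have := mul_left_cancel₀ ha1 (by linear_combination a1 * this : a1 * (a3 * (1 - q^3)) = a1 * (q^3 * a1^3))
    linear_combination this
  · intro h2
    subst h2
    have ha4 : a4 * (q ^ 3 - 1) = q ^ 3 * a1 ^ 4 := by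
      rw [hL] at hC; linear_combination -hC + 2 * q ^ 3 * hB
    have ha4' : a4 = q ^ 3 * a1 ^ 4 / (q ^ 3 - 1) := by
      field_simp; linear_combination ha4
    refine ⟨?_, ha4'⟩
    field_simp
    have : a1 * a3 * (q ^ 3 - 1) = q ^ 3 * a1 ^ 4 := by rw [← hB]; exact ha4
    have := mul_left_cancel₀ ha1 (by linear_combination this : a1 * (a3 * (q^3 - 1)) = a1 * (q^3 * a1^3))
    linear_combination this
end

section
/- Let q, a_1 ∈ ℂ with q ≠ 0 and qⁿ ≠ 1 for every n ≥ 1, and let j = exp(2πi/3). Let a : ℕ → ℂ with a_0 = 1 (and with the convention a_m = 0 for m < 0) satisfy, for every n ≥ 1 and every x ∈ {q, jq, j̄q}, the recurrence a_n = x^{n−1}·( x·a_n + a_1(1−x)·a_{n−1} + a_1²(x−1)·a_{n−2} + a_1³·a_{n−3} ). Then for all n ≥ 0: a_{3n+2} = 0, a_{3n+1} = a_1·a_{3n}, and a_{3n} = q^{3n(n+1)/2}·a_1^{3n} / ∏_{k=1}^{n}(1 − q^{3k}). -/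
open Complex Finset

lemma tri_aux {j A B C : ℂ} (hsum : j^2 + j + 1 = 0)
    (e0 : A + B + C = 0) (e1 : A + j*B + j^2*C = 0) (e2 : A + j^2*B + j*C = 0) :
    A = 0 ∧ B = 0 ∧ C = 0 := by
  have ht : (2*j+1) ≠ 0 := by
    intro h
    have h2 : (2*j+1)^2 = -3 := by linear_combination 4*hsum
    rw [h] at h2; norm_num at h2
  have hBC : B = C := by
    have h1 : (2*j+1) * (B - C) = 0 := by linear_combination e1 - e2 + (B - C) * hsum
    have := (mul_eq_zero.mp h1).resolve_left ht
    exact sub_eq_zero.mp this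
  have hB : B = 0 := by
    have h2 : (3:ℂ) * B = 0 := by linear_combination e0 - e1 + (1 - j^2) * hBC + B * hsum
    exact (mul_eq_zero.mp h2).resolve_left (by norm_num)
  have hC : C = 0 := hBC ▸ hB
  have hA : A = 0 := by linear_combination e0 - hB - hC
  exact ⟨hA, hB, hC⟩

lemma jpow_red {j : ℂ} (hj0 : j ≠ 0) (hj3 : j ^ 3 = 1) (N s : ℤ) :
    j ^ (3 * N + s) = j ^ s := by
  have h3 : j ^ ((3:ℤ)) = 1 := by
    rw [show (3:ℤ) = ((3:ℕ):ℤ) from rfl, zpow_natCast, hj3]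
  rw [zpow_add₀ hj0, zpow_mul, h3, one_zpow, one_mul]

lemma caseR2 {q a1 j : ℂ} {a : ℤ → ℂ} (hq : q ≠ 0) (hj0 : j ≠ 0)
    (hj3 : j ^ 3 = 1) (hsum : j^2 + j + 1 = 0)
    (hrec : ∀ n : ℤ, 1 ≤ n → ∀ x ∈ ({q, j * q, j ^ 2 * q} : Set ℂ),
      a n = x ^ (n - 1) * (x * a n + a1 * (1 - x) * a (n - 1)
        + a1 ^ 2 * (x - 1) * a (n - 2) + a1 ^ 3 * a (n - 3)))
    (M : ℤ) (hM : 0 ≤ M) : a (3 * M + 2) = 0 := by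
  have hn1 : (1:ℤ) ≤ 3 * M + 2 := by omega
  have E0 := hrec (3*M+2) hn1 q (by simp)
  have E1 := hrec (3*M+2) hn1 (j*q) (by simp)
  have E2 := hrec (3*M+2) hn1 (j^2*q) (by simp)
  rw [show (3*M+2 : ℤ) - 1 = 3*M+1 by ring, show (3*M+2 : ℤ) - 2 = 3*M by ring,
      show (3*M+2 : ℤ) - 3 = 3*M-1 by ring] at E0 E1 E2
  rw [mul_zpow, jpow_red hj0 hj3 M 1, zpow_one] at E1
  rw [mul_zpow] at E2
  rw [show ((j^2 : ℂ))^(3*M+1 : ℤ) = j ^ (3*(2*M)+2 : ℤ) by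
        rw [← zpow_natCast j 2, ← zpow_mul]; congr 1; ring,
      jpow_red hj0 hj3 (2*M) 2,
      show (j : ℂ) ^ (2:ℤ) = j^2 by rw [← zpow_natCast j 2]; norm_num] at E2
  obtain ⟨Q, hQ⟩ : ∃ Q, q^(3*M+1 : ℤ) = Q := ⟨_, rfl⟩
  rw [hQ] at E0 E1 E2
  have h := tri_aux (j := j)
    (A := -(a (3*M+2)))
    (B := Q*(a1*a (3*M+1) - a1^2*a (3*M) + a1^3*a (3*M-1)))
    (C := Q*q*(a (3*M+2) + a1^2*a (3*M) - a1*a (3*M+1)))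
    hsum (by linear_combination -E0) (by linear_combination -E1)
    (by linear_combination -E2 - j*(j-1)*(Q*q*(a (3*M+2) + a1^2*a (3*M) - a1*a (3*M+1)))*hsum)
  exact neg_eq_zero.mp h.1

lemma caseR1 {q a1 j : ℂ} {a : ℤ → ℂ} (hq : q ≠ 0) (hj0 : j ≠ 0)
    (hj3 : j ^ 3 = 1) (hsum : j^2 + j + 1 = 0)
    (hrec : ∀ n : ℤ, 1 ≤ n → ∀ x ∈ ({q, j * q, j ^ 2 * q} : Set ℂ),
      a n = x ^ (n - 1) * (x * a n + a1 * (1 - x) * a (n - 1)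
        + a1 ^ 2 * (x - 1) * a (n - 2) + a1 ^ 3 * a (n - 3)))
    (M : ℤ) (hM : 0 ≤ M) :
    a (3 * M + 1) = a1 * a (3 * M) - a1 ^ 2 * a (3 * M - 1) := by
  have hn1 : (1:ℤ) ≤ 3 * M + 1 := by omega
  have E0 := hrec (3*M+1) hn1 q (by simp)
  have E1 := hrec (3*M+1) hn1 (j*q) (by simp)
  have E2 := hrec (3*M+1) hn1 (j^2*q) (by simp)
  rw [show (3*M+1 : ℤ) - 1 = 3*M+0 by ring, show (3*M+1 : ℤ) - 2 = 3*M-1 by ring,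
      show (3*M+1 : ℤ) - 3 = 3*M-2 by ring] at E0 E1 E2
  rw [mul_zpow, jpow_red hj0 hj3 M 0, zpow_zero, one_mul] at E1
  rw [mul_zpow] at E2
  rw [show ((j^2 : ℂ))^(3*M+0 : ℤ) = j ^ (3*(2*M)+0 : ℤ) by
        rw [← zpow_natCast j 2, ← zpow_mul]; congr 1; ring,
      jpow_red hj0 hj3 (2*M) 0, zpow_zero, one_mul] at E2
  obtain ⟨Q, hQ⟩ : ∃ Q, q^(3*M+0 : ℤ) = Q := ⟨_, rfl⟩
  have hQ0 : Q ≠ 0 := hQ ▸ zpow_ne_zero _ hq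
  rw [hQ] at E0 E1 E2
  have h := tri_aux (j := j)
    (A := Q*(a1*a (3*M+0) - a1^2*a (3*M-1) + a1^3*a (3*M-2)) - a (3*M+1))
    (B := Q*q*(a (3*M+1) + a1^2*a (3*M-1) - a1*a (3*M+0)))
    (C := (0:ℂ))
    hsum (by linear_combination -E0) (by linear_combination -E1)
    (by linear_combination -E2)
  have hB := h.2.1
  have hQq : Q * q ≠ 0 := mul_ne_zero hQ0 hq
  have h0 : a (3*M+1) + a1^2*a (3*M-1) - a1*a (3*M+0) = 0 :=
    (mul_eq_zero.mp hB).resolve_left hQq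
  have : a (3*M+0) = a (3*M) := by norm_num
  rw [this] at h0
  linear_combination h0

lemma caseR0 {q a1 j : ℂ} {a : ℤ → ℂ} (hq : q ≠ 0) (hj0 : j ≠ 0)
    (hj3 : j ^ 3 = 1) (hsum : j^2 + j + 1 = 0)
    (hrec : ∀ n : ℤ, 1 ≤ n → ∀ x ∈ ({q, j * q, j ^ 2 * q} : Set ℂ),
      a n = x ^ (n - 1) * (x * a n + a1 * (1 - x) * a (n - 1)
        + a1 ^ 2 * (x - 1) * a (n - 2) + a1 ^ 3 * a (n - 3)))
    (M : ℤ) (hM : 1 ≤ M) :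
    a (3 * M) * (1 - q ^ (3 * M)) = q ^ (3 * M) * (a1 ^ 3 * a (3 * M - 3)) := by
  have hn1 : (1:ℤ) ≤ 3 * M := by omega
  have E0 := hrec (3*M) hn1 q (by simp)
  have E1 := hrec (3*M) hn1 (j*q) (by simp)
  have E2 := hrec (3*M) hn1 (j^2*q) (by simp)
  rw [mul_zpow, show (3*M : ℤ) - 1 = 3*(M-1)+2 by ring,
      jpow_red hj0 hj3 (M-1) 2,
      show (j : ℂ) ^ (2:ℤ) = j^2 by rw [← zpow_natCast j 2]; norm_num] at E1
  rw [mul_zpow, show (3*M : ℤ) - 1 = 3*(M-1)+2 by ring] at E2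
  rw [show ((j^2 : ℂ))^(3*(M-1)+2 : ℤ) = j ^ (3*(2*M-1)+1 : ℤ) by
        rw [← zpow_natCast j 2, ← zpow_mul]; congr 1; ring,
      jpow_red hj0 hj3 (2*M-1) 1, zpow_one] at E2
  rw [show (3*M : ℤ) - 1 = 3*(M-1)+2 by ring] at E0
  obtain ⟨Q, hQ⟩ : ∃ Q, q^(3*(M-1)+2 : ℤ) = Q := ⟨_, rfl⟩
  have hQ0 : Q ≠ 0 := hQ ▸ zpow_ne_zero _ hq
  rw [hQ] at E0 E1 E2
  rw [show (3*(M-1)+2 : ℤ) = 3*M-1 by ring] at E0 E1 E2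
  have h := tri_aux (j := j)
    (A := Q*q*(a (3*M) + a1^2*a (3*M-2) - a1*a (3*M-1)) - a (3*M))
    (B := (0:ℂ))
    (C := Q*(a1*a (3*M-1) - a1^2*a (3*M-2) + a1^3*a (3*M-3)))
    hsum (by linear_combination -E0)
    (by linear_combination -E1 + (1-j)*(Q*q*(a (3*M) + a1^2*a (3*M-2) - a1*a (3*M-1)))*hsum)
    (by linear_combination -E2 + (1-j)*(Q*q*(a (3*M) + a1^2*a (3*M-2) - a1*a (3*M-1)))*hsum)
  have hA := h.1
  have hC : a1*a (3*M-1) - a1^2*a (3*M-2) + a1^3*a (3*M-3) = 0 :=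
    (mul_eq_zero.mp h.2.2).resolve_left hQ0
  have hQq : Q * q = q ^ (3*M : ℤ) := by
    rw [← hQ, ← zpow_add_one₀ hq]; congr 1; ring
  rw [← hQq]
  linear_combination -hA - Q*q*hC

/-- Solution of the recurrence
`aₙ = x^{n−1}(x·aₙ + a₁(1−x)aₙ₋₁ + a₁²(x−1)aₙ₋₂ + a₁³aₙ₋₃)` for `x ∈ {q, jq, j̄q}`. -/
theorem recurrence_solution_case_a2_zero
    (q a1 : ℂ) (hq : q ≠ 0) (hqn : ∀ n : ℕ, 1 ≤ n → q ^ n ≠ 1)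
    (j : ℂ) (hj : j = Complex.exp (2 * Real.pi * Complex.I / 3))
    (a : ℤ → ℂ) (ha0 : a 0 = 1) (haneg : ∀ m : ℤ, m < 0 → a m = 0)
    (hrec : ∀ n : ℤ, 1 ≤ n → ∀ x ∈ ({q, j * q, j ^ 2 * q} : Set ℂ),
      a n = x ^ (n - 1) * (x * a n + a1 * (1 - x) * a (n - 1)
        + a1 ^ 2 * (x - 1) * a (n - 2) + a1 ^ 3 * a (n - 3))) :
    ∀ n : ℕ,
      a (3 * (n : ℤ) + 2) = 0 ∧
      a (3 * (n : ℤ) + 1) = a1 * a (3 * (n : ℤ)) ∧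
      a (3 * (n : ℤ)) = q ^ (3 * n * (n + 1) / 2) * a1 ^ (3 * n)
        / ∏ k ∈ Finset.range n, (1 - q ^ (3 * (k + 1))) := by
  have hprim : IsPrimitiveRoot j 3 := by
    rw [hj]
    have := Complex.isPrimitiveRoot_exp 3 (by norm_num)
    simpa using this
  have hj3 : j ^ 3 = 1 := hprim.pow_eq_one
  have hj1 : j ≠ 1 := hprim.ne_one (by norm_num)
  have hj0 : j ≠ 0 := by
    intro h; rw [h] at hj3; norm_num at hj3
  have hsum : j ^ 2 + j + 1 = 0 := by
    have h0 : (j - 1) * (j ^ 2 + j + 1) = 0 := by linear_combination hj3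
    exact (mul_eq_zero.mp h0).resolve_left (sub_ne_zero.mpr hj1)
  intro n
  induction n with
  | zero =>
    refine ⟨?_, ?_, ?_⟩
    · have := caseR2 hq hj0 hj3 hsum hrec 0 le_rfl
      simpa using this
    · have h1 := caseR1 hq hj0 hj3 hsum hrec 0 le_rfl
      have hneg : a (3 * (0:ℤ) - 1) = 0 := haneg _ (by norm_num)
      rw [hneg] at h1
      simpa using h1
    · simp [ha0]
  | succ m ih =>
    obtain ⟨ih2, ih1, ih0⟩ := ih
    -- the value at 3(m+1)
    have hM1 : (1:ℤ) ≤ (m:ℤ) + 1 := by omega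
    have h0 := caseR0 hq hj0 hj3 hsum hrec ((m:ℤ)+1) hM1
    have hidx : (3 : ℤ) * ((m:ℤ)+1) - 3 = 3 * (m:ℤ) := by ring
    rw [hidx] at h0
    have hzp : q ^ (3 * ((m:ℤ)+1)) = q ^ (3*(m+1) : ℕ) := by
      rw [show (3 * ((m:ℤ)+1)) = ((3*(m+1) : ℕ) : ℤ) by push_cast; ring, zpow_natCast]
    rw [hzp] at h0
    have hne : (1:ℂ) - q ^ (3*(m+1) : ℕ) ≠ 0 :=
      sub_ne_zero.mpr (Ne.symm (hqn _ (by omega)))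
    have hprodne : (∏ k ∈ Finset.range m, (1 - q ^ (3 * (k + 1)))) ≠ 0 :=
      Finset.prod_ne_zero_iff.mpr
        (fun k _ => sub_ne_zero.mpr (Ne.symm (hqn _ (by omega))))
    have hval : a (3 * ((m:ℤ)+1)) =
        q ^ (3 * (m+1) * (m + 1 + 1) / 2) * a1 ^ (3 * (m+1))
          / ∏ k ∈ Finset.range (m+1), (1 - q ^ (3 * (k + 1))) := by
      have hexp : 3 * (m+1) * (m + 1 + 1) / 2 = 3 * m * (m + 1) / 2 + 3*(m+1) := by
        have h2 : 2 ∣ 3 * m * (m+1) := by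
          rcases Nat.even_or_odd m with ⟨c, hc⟩ | ⟨c, hc⟩
          · exact ⟨3*c*(m+1), by subst hc; ring⟩
          · exact ⟨3*m*(c+1), by subst hc; ring⟩
        have h3 : 2 ∣ 3 * (m+1) * (m+1+1) := by
          rcases Nat.even_or_odd m with ⟨c, hc⟩ | ⟨c, hc⟩
          · exact ⟨3*(m+1)*(c+1), by subst hc; ring⟩
          · exact ⟨3*(c+1)*(m+2), by subst hc; ring⟩
        have key : 3 * (m+1) * (m+1+1) = 3*m*(m+1) + 6*(m+1) := by ring
        omega
      have hXa : a (3*((m:ℤ)+1)) =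
          q^(3*(m+1):ℕ) * (a1^3 * a (3*(m:ℤ))) / (1 - q^(3*(m+1):ℕ)) :=
        (eq_div_iff hne).mpr h0
      rw [hXa, ih0, Finset.prod_range_succ, hexp, pow_add]
      field_simp
      ring
    refine ⟨?_, ?_, ?_⟩
    · have := caseR2 hq hj0 hj3 hsum hrec ((m:ℤ)+1) (by omega)
      have heq : (3:ℤ) * ((m:ℤ)+1) + 2 = 3 * ((m+1 : ℕ) : ℤ) + 2 := by push_cast; ring
      rw [heq] at this; exact this
    · have h1 := caseR1 hq hj0 hj3 hsum hrec ((m:ℤ)+1) (by omega)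
      have hidx2 : (3:ℤ) * ((m:ℤ)+1) - 1 = 3 * (m:ℤ) + 2 := by ring
      rw [hidx2, ih2] at h1
      have heq : (3:ℤ) * ((m:ℤ)+1) = 3 * ((m+1 : ℕ) : ℤ) := by push_cast; ring
      rw [heq] at h1
      rw [h1]; ring
    · have heq : (3:ℤ) * ((m:ℤ)+1) = 3 * ((m+1 : ℕ) : ℤ) := by push_cast; ring
      rw [heq] at hval
      exact hval
end

section
/- Let q, a_1 ∈ ℂ with q ≠ 0 and qⁿ ≠ 1 for every n ≥ 1, and let j = exp(2πi/3). Let a : ℕ → ℂ with a_0 = 1 (and with the convention a_m = 0 for m < 0) satisfy, for every n ≥ 1 and every x ∈ {q, jq, j̄q}, the recurrence a_n = x^{n−2}·( x²·a_n + a_1(x − x²)·a_{n−1} + a_1²(1−x)·a_{n−2} − a_1³·a_{n−3} ). Then for all n ≥ 0: a_{3n+2} = a_1·a_{3n+1}, a_{3n+1} = a_1·a_{3n}, and a_{3n} = (−1)ⁿ·q^{3n(n+1)/2}·a_1^{3n} / ∏_{k=1}^{n}(1 − q^{3k}). -/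
open Complex Finset

/-- Solution of the recurrence
`aₙ = x^{n−2}(x²aₙ + a₁(x−x²)aₙ₋₁ + a₁²(1−x)aₙ₋₂ − a₁³aₙ₋₃)` for `x ∈ {q, jq, j̄q}`. -/
theorem recurrence_solution_case_a2_a1sq
    (q a1 : ℂ) (hq : q ≠ 0) (hqn : ∀ n : ℕ, 1 ≤ n → q ^ n ≠ 1)
    (j : ℂ) (hj : j = Complex.exp (2 * Real.pi * Complex.I / 3))
    (a : ℤ → ℂ) (ha0 : a 0 = 1) (haneg : ∀ m : ℤ, m < 0 → a m = 0)
    (hrec : ∀ n : ℤ, 1 ≤ n → ∀ x ∈ ({q, j * q, j ^ 2 * q} : Set ℂ),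
      a n = x ^ (n - 2) * (x ^ 2 * a n + a1 * (x - x ^ 2) * a (n - 1)
        + a1 ^ 2 * (1 - x) * a (n - 2) - a1 ^ 3 * a (n - 3))) :
    ∀ n : ℕ,
      a (3 * (n : ℤ) + 2) = a1 * a (3 * (n : ℤ) + 1) ∧
      a (3 * (n : ℤ) + 1) = a1 * a (3 * (n : ℤ)) ∧
      a (3 * (n : ℤ)) = (-1) ^ n * q ^ (3 * n * (n + 1) / 2) * a1 ^ (3 * n)
        / ∏ k ∈ Finset.range n, (1 - q ^ (3 * (k + 1))) := by
  -- basic facts about j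
  have hj3 : j ^ 3 = 1 := by
    rw [hj, ← Complex.exp_nat_mul,
      show ((3 : ℕ) : ℂ) * (2 * ↑Real.pi * Complex.I / 3) = 2 * ↑Real.pi * Complex.I by
        push_cast; ring, Complex.exp_two_pi_mul_I]
  have hjne0 : j ≠ 0 := by
    intro h; rw [h] at hj3; norm_num at hj3
  have hjne1 : j ≠ 1 := by
    rw [hj]
    intro h
    rw [Complex.exp_eq_one_iff] at h
    obtain ⟨k, hk⟩ := h
    have hpi : (Real.pi : ℂ) ≠ 0 := by
      exact_mod_cast Real.pi_ne_zero
    have hI : Complex.I ≠ 0 := Complex.I_ne_zero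
    have h3 : (3 : ℂ) * (↑k * (2 * ↑Real.pi * Complex.I)) = 3 * (2 * ↑Real.pi * Complex.I / 3) := by
      rw [hk]
    have h4 : (3 * (k : ℂ) - 1) * (2 * ↑Real.pi * Complex.I) = 0 := by ring_nf; ring_nf at h3; linear_combination h3
    have h5 : (3 * (k : ℂ) - 1) = 0 := by
      rcases mul_eq_zero.mp h4 with h | h
      · exact h
      · exfalso; exact (mul_ne_zero (mul_ne_zero two_ne_zero hpi) hI) h
    have h6 : (3 * k - 1 : ℤ) = 0 := by exact_mod_cast h5
    omega
  have hjs : 1 + j + j ^ 2 = 0 := by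
    have h : (j - 1) * (1 + j + j ^ 2) = 0 := by linear_combination hj3
    rcases mul_eq_zero.mp h with h' | h'
    · exact absurd (sub_eq_zero.mp h') hjne1
    · exact h'
  -- zpow of cube roots of unity
  have hpows : ∀ c : ℂ, c ≠ 0 → c ^ (3 : ℕ) = 1 →
      ∀ m : ℤ, c ^ (3 * m) = 1 ∧ c ^ (3 * m - 1) = c ^ 2 ∧ c ^ (3 * m - 2) = c := by
    intro c hc h3 m
    have h3' : c ^ (3 : ℤ) = 1 := by
      rw [show (3 : ℤ) = ((3 : ℕ) : ℤ) from rfl, zpow_natCast]; exact h3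
    have h1 : c ^ (3 * m) = 1 := by rw [zpow_mul, h3', one_zpow]
    refine ⟨h1, ?_, ?_⟩
    · have hinv : c⁻¹ = c ^ 2 := inv_eq_of_mul_eq_one_right (by linear_combination h3)
      rw [zpow_sub₀ hc, h1, zpow_one, one_div, hinv]
    · have hinv : (c ^ 2)⁻¹ = c := inv_eq_of_mul_eq_one_right (by linear_combination h3)
      rw [zpow_sub₀ hc, h1, one_div, show (2 : ℤ) = ((2 : ℕ) : ℤ) from rfl, zpow_natCast, hinv]
  have hj23 : (j ^ 2) ^ (3 : ℕ) = 1 := by linear_combination (j ^ 3 + 1) * hj3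
  have hj2ne0 : j ^ 2 ≠ 0 := pow_ne_zero 2 hjne0
  have hm1 : ∀ x : ℂ, x ∈ ({q, j * q, j ^ 2 * q} : Set ℂ) → True := fun _ _ => trivial
  have memq : q ∈ ({q, j * q, j ^ 2 * q} : Set ℂ) := Set.mem_insert _ _
  have memjq : j * q ∈ ({q, j * q, j ^ 2 * q} : Set ℂ) :=
    Set.mem_insert_of_mem _ (Set.mem_insert _ _)
  have memj2q : j ^ 2 * q ∈ ({q, j * q, j ^ 2 * q} : Set ℂ) :=
    Set.mem_insert_of_mem _ (Set.mem_insert_of_mem _ rfl)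
  -- Case A : a (3m+1) = a1 * a (3m)
  have hA : ∀ m : ℕ, a (3 * (m : ℤ) + 1) = a1 * a (3 * (m : ℤ)) := by
    intro m
    have hn1 : (1 : ℤ) ≤ 3 * (m : ℤ) + 1 := by omega
    have e1 := hrec (3 * (m : ℤ) + 1) hn1 q memq
    have e2 := hrec (3 * (m : ℤ) + 1) hn1 (j * q) memjq
    have e3 := hrec (3 * (m : ℤ) + 1) hn1 (j ^ 2 * q) memj2q
    rw [show (3 * (m : ℤ) + 1) - 2 = 3 * (m : ℤ) - 1 by ring] at e1 e2 e3
    rw [mul_zpow, (hpows j hjne0 hj3 (m : ℤ)).2.1] at e2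
    rw [mul_zpow, (hpows (j ^ 2) hj2ne0 hj23 (m : ℤ)).2.1] at e3
    have key : 3 * (q ^ (3 * (m : ℤ) - 1)) * q ^ 2 *
        (a (3 * (m : ℤ) + 1) - a1 * a (3 * (m : ℤ) + 1 - 1)) = 0 := by
      linear_combination (-1 : ℂ) * e1 - j ^ 2 * e2 - j * e3 + ((1:ℂ) * a (3 * (m : ℤ) + 1) + (-1:ℂ) * (q ^ (3 * (m : ℤ) - 1)) * a1 ^ 2 * a (3 * (m : ℤ) - 1) + (1:ℂ) * (q ^ (3 * (m : ℤ) - 1)) * a1 ^ 3 * a (3 * (m : ℤ) + 1 - 3) + (-1:ℂ) * q * (q ^ (3 * (m : ℤ) - 1)) * a1 * a (3 * (m : ℤ) + 1 - 1) + (1:ℂ) * q * (q ^ (3 * (m : ℤ) - 1)) * a1 ^ 2 * a (3 * (m : ℤ) - 1) + (2:ℂ) * q ^ 2 * (q ^ (3 * (m : ℤ) - 1)) * a (3 * (m : ℤ) + 1) + (-2:ℂ) * q ^ 2 * (q ^ (3 * (m : ℤ) - 1)) * a1 * a (3 * (m : ℤ) + 1 - 1) + (1:ℂ) * j * (q ^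 (3 * (m : ℤ) - 1)) * a1 ^ 2 * a (3 * (m : ℤ) - 1) + (-1:ℂ) * j * (q ^ (3 * (m : ℤ) - 1)) * a1 ^ 3 * a (3 * (m : ℤ) + 1 - 3) + (1:ℂ) * j * q * (q ^ (3 * (m : ℤ) - 1)) * a1 * a (3 * (m : ℤ) + 1 - 1) + (-1:ℂ) * j * q * (q ^ (3 * (m : ℤ) - 1)) * a1 ^ 2 * a (3 * (m : ℤ) - 1) + (-2:ℂ) * j * q ^ 2 * (q ^ (3 * (m : ℤ) - 1)) * a (3 * (m : ℤ) + 1) + (2:ℂ) * j * q ^ 2 * (q ^ (3 * (m : ℤ) - 1)) * a1 * a (3 * (m : ℤ) + 1 - 1) + (-1:ℂ) * j ^ 3 * (q ^ (3 * (m : ℤ) - 1)) * a1 ^ 2 * a (3 * (m : ℤ) - 1) + (1:ℂ) * j ^ 3 * (q ^ (3 * (m : ℤ) - 1)) * a1 ^ 3 * a (3 * (m : ℤ) + 1 - 3) + (-1:ℂ) * j ^ 3 * q * (q ^ (3 * (m : ℤ) - 1)) * a1 * a (3 * (m : ℤ) + 1 - 1) + (1:ℂ) * j ^ 3 * q * (q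 ^ (3 * (m : ℤ) - 1)) * a1 ^ 2 * a (3 * (m : ℤ) - 1) + (2:ℂ) * j ^ 3 * q ^ 2 * (q ^ (3 * (m : ℤ) - 1)) * a (3 * (m : ℤ) + 1) + (-2:ℂ) * j ^ 3 * q ^ 2 * (q ^ (3 * (m : ℤ) - 1)) * a1 * a (3 * (m : ℤ) + 1 - 1) + (1:ℂ) * j ^ 4 * q * (q ^ (3 * (m : ℤ) - 1)) * a1 * a (3 * (m : ℤ) + 1 - 1) + (-1:ℂ) * j ^ 4 * q * (q ^ (3 * (m : ℤ) - 1)) * a1 ^ 2 * a (3 * (m : ℤ) - 1) + (-2:ℂ) * j ^ 4 * q ^ 2 * (q ^ (3 * (m : ℤ) - 1)) * a (3 * (m : ℤ) + 1) + (2:ℂ) * j ^ 4 * q ^ 2 * (q ^ (3 * (m : ℤ) - 1)) * a1 * a (3 * (m : ℤ) + 1 - 1) + (-1:ℂ) * j ^ 5 * q * (q ^ (3 * (m : ℤ) - 1)) * a1 * a (3 * (m : ℤ) + 1 - 1) + (1:ℂ) * j ^ 5 * q * (q ^ (3 * (m : ℤ) - 1)) * a1 ^ 2 * a (3 * (m :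 ℤ) - 1) + (1:ℂ) * j ^ 6 * q ^ 2 * (q ^ (3 * (m : ℤ) - 1)) * a (3 * (m : ℤ) + 1) + (-1:ℂ) * j ^ 6 * q ^ 2 * (q ^ (3 * (m : ℤ) - 1)) * a1 * a (3 * (m : ℤ) + 1 - 1) + (-1:ℂ) * j ^ 7 * q ^ 2 * (q ^ (3 * (m : ℤ) - 1)) * a (3 * (m : ℤ) + 1) + (1:ℂ) * j ^ 7 * q ^ 2 * (q ^ (3 * (m : ℤ) - 1)) * a1 * a (3 * (m : ℤ) + 1 - 1)) * hjs
    have hne : (3 : ℂ) * (q ^ (3 * (m : ℤ) - 1)) * q ^ 2 ≠ 0 :=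
      mul_ne_zero (mul_ne_zero (by norm_num) (zpow_ne_zero _ hq)) (pow_ne_zero 2 hq)
    have h5 := (mul_eq_zero.mp key).resolve_left hne
    have h6 := sub_eq_zero.mp h5
    rw [show 3 * (m : ℤ) + 1 - 1 = 3 * (m : ℤ) by ring] at h6
    exact h6
  -- Case B : a (3m+2) = a1 * a (3m+1)
  have hB : ∀ m : ℕ, a (3 * (m : ℤ) + 2) = a1 * a (3 * (m : ℤ) + 1) := by
    intro m
    have hn1 : (1 : ℤ) ≤ 3 * (m : ℤ) + 2 := by omega
    have e1 := hrec (3 * (m : ℤ) + 2) hn1 q memq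
    have e2 := hrec (3 * (m : ℤ) + 2) hn1 (j * q) memjq
    have e3 := hrec (3 * (m : ℤ) + 2) hn1 (j ^ 2 * q) memj2q
    rw [show (3 * (m : ℤ) + 2) - 2 = 3 * (m : ℤ) by ring] at e1 e2 e3
    rw [mul_zpow, (hpows j hjne0 hj3 (m : ℤ)).1] at e2
    rw [mul_zpow, (hpows (j ^ 2) hj2ne0 hj23 (m : ℤ)).1] at e3
    have key : 3 * (q ^ (3 * (m : ℤ))) * q ^ 2 *
        (a (3 * (m : ℤ) + 2) - a1 * a (3 * (m : ℤ) + 2 - 1)) = 0 := by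
      linear_combination (-1 : ℂ) * e1 - j * e2 - j ^ 2 * e3 + ((1:ℂ) * a (3 * (m : ℤ) + 2) + (-1:ℂ) * (q ^ (3 * (m : ℤ))) * a1 ^ 2 * a (3 * (m : ℤ)) + (1:ℂ) * (q ^ (3 * (m : ℤ))) * a1 ^ 3 * a (3 * (m : ℤ) + 2 - 3) + (-1:ℂ) * q * (q ^ (3 * (m : ℤ))) * a1 * a (3 * (m : ℤ) + 2 - 1) + (1:ℂ) * q * (q ^ (3 * (m : ℤ))) * a1 ^ 2 * a (3 * (m : ℤ)) + (2:ℂ) * q ^ 2 * (q ^ (3 * (m : ℤ))) * a (3 * (m : ℤ) + 2) + (-2:ℂ) * q ^ 2 * (q ^ (3 * (m : ℤ))) * a1 * a (3 * (m : ℤ) + 2 - 1) + (1:ℂ) * j * q * (q ^ (3 * (m : ℤ))) * a1 * a (3 * (m : ℤ) + 2 - 1) + (-1:ℂ) * j * q * (q ^ (3 * (m : ℤ))) * a1 ^ 2 * a (3 * (m : ℤ)) + (-2:ℂ) * j * q ^ 2 * (q ^ (3 * (m : ℤ))) * a (3 * (m : ℤ) + 2) + (2:ℂ) * j * q ^ 2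 * (q ^ (3 * (m : ℤ))) * a1 * a (3 * (m : ℤ) + 2 - 1) + (-1:ℂ) * j ^ 2 * q * (q ^ (3 * (m : ℤ))) * a1 * a (3 * (m : ℤ) + 2 - 1) + (1:ℂ) * j ^ 2 * q * (q ^ (3 * (m : ℤ))) * a1 ^ 2 * a (3 * (m : ℤ)) + (1:ℂ) * j ^ 3 * q ^ 2 * (q ^ (3 * (m : ℤ))) * a (3 * (m : ℤ) + 2) + (-1:ℂ) * j ^ 3 * q ^ 2 * (q ^ (3 * (m : ℤ))) * a1 * a (3 * (m : ℤ) + 2 - 1) + (-1:ℂ) * j ^ 4 * q ^ 2 * (q ^ (3 * (m : ℤ))) * a (3 * (m : ℤ) + 2) + (1:ℂ) * j ^ 4 * q ^ 2 * (q ^ (3 * (m : ℤ))) * a1 * a (3 * (m : ℤ) + 2 - 1)) * hjs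
    have hne : (3 : ℂ) * (q ^ (3 * (m : ℤ))) * q ^ 2 ≠ 0 :=
      mul_ne_zero (mul_ne_zero (by norm_num) (zpow_ne_zero _ hq)) (pow_ne_zero 2 hq)
    have h5 := (mul_eq_zero.mp key).resolve_left hne
    have h6 := sub_eq_zero.mp h5
    rw [show 3 * (m : ℤ) + 2 - 1 = 3 * (m : ℤ) + 1 by ring] at h6
    exact h6
  -- Case C : (1 - q^(3m)) * a (3m) = -(a1 * q^(3m) * a (3m - 1)) for m ≥ 1
  have hC : ∀ m : ℕ, 1 ≤ m →
      (1 - q ^ (3 * m)) * a (3 * (m : ℤ)) = -(a1 * q ^ (3 * m) * a (3 * (m : ℤ) - 1)) := by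
    intro m hm
    have hn1 : (1 : ℤ) ≤ 3 * (m : ℤ) := by omega
    have e1 := hrec (3 * (m : ℤ)) hn1 q memq
    have e2 := hrec (3 * (m : ℤ)) hn1 (j * q) memjq
    have e3 := hrec (3 * (m : ℤ)) hn1 (j ^ 2 * q) memj2q
    rw [mul_zpow, (hpows j hjne0 hj3 (m : ℤ)).2.2] at e2
    rw [mul_zpow, (hpows (j ^ 2) hj2ne0 hj23 (m : ℤ)).2.2] at e3
    have key : 3 * a (3 * (m : ℤ)) = 3 * (q ^ (3 * (m : ℤ) - 2)) * q ^ 2 *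
        (a (3 * (m : ℤ)) - a1 * a (3 * (m : ℤ) - 1)) := by
      linear_combination e1 + e2 + e3 + ((1:ℂ) * (q ^ (3 * (m : ℤ) - 2)) * a1 ^ 2 * a (3 * (m : ℤ) - 2) + (-1:ℂ) * (q ^ (3 * (m : ℤ) - 2)) * a1 ^ 3 * a (3 * (m : ℤ) - 3) + (1:ℂ) * q * (q ^ (3 * (m : ℤ) - 2)) * a1 * a (3 * (m : ℤ) - 1) + (-1:ℂ) * q * (q ^ (3 * (m : ℤ) - 2)) * a1 ^ 2 * a (3 * (m : ℤ) - 2) + (-2:ℂ) * q ^ 2 * (q ^ (3 * (m : ℤ) - 2)) * a (3 * (m : ℤ)) + (2:ℂ) * q ^ 2 * (q ^ (3 * (m : ℤ) - 2)) * a1 * a (3 * (m : ℤ) - 1) + (-1:ℂ) * j * q * (q ^ (3 * (m : ℤ) - 2)) * a1 * a (3 * (m : ℤ) - 1) + (1:ℂ) * j * q * (q ^ (3 * (m : ℤ) - 2)) * a1 ^ 2 * a (3 * (m : ℤ) - 2) + (2:ℂ) * j * q ^ 2 * (q ^ (3 * (m : ℤ) - 2)) * a (3 * (m : ℤ)) +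 (-2:ℂ) * j * q ^ 2 * (q ^ (3 * (m : ℤ) - 2)) * a1 * a (3 * (m : ℤ) - 1) + (1:ℂ) * j ^ 2 * q * (q ^ (3 * (m : ℤ) - 2)) * a1 * a (3 * (m : ℤ) - 1) + (-1:ℂ) * j ^ 2 * q * (q ^ (3 * (m : ℤ) - 2)) * a1 ^ 2 * a (3 * (m : ℤ) - 2) + (-1:ℂ) * j ^ 3 * q ^ 2 * (q ^ (3 * (m : ℤ) - 2)) * a (3 * (m : ℤ)) + (1:ℂ) * j ^ 3 * q ^ 2 * (q ^ (3 * (m : ℤ) - 2)) * a1 * a (3 * (m : ℤ) - 1) + (1:ℂ) * j ^ 4 * q ^ 2 * (q ^ (3 * (m : ℤ) - 2)) * a (3 * (m : ℤ)) + (-1:ℂ) * j ^ 4 * q ^ 2 * (q ^ (3 * (m : ℤ) - 2)) * a1 * a (3 * (m : ℤ) - 1)) * hjs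
    have hQq : q ^ (3 * (m : ℤ) - 2) * q ^ (2 : ℕ) = q ^ (3 * m) := by
      rw [← zpow_natCast q 2, ← zpow_add₀ hq,
        show 3 * (m : ℤ) - 2 + (2 : ℕ) = ((3 * m : ℕ) : ℤ) by push_cast; ring, zpow_natCast]
    linear_combination (1 / 3 : ℂ) * key +
      (a (3 * (m : ℤ)) - a1 * a (3 * (m : ℤ) - 1)) * hQq
  -- main induction
  intro n
  induction n with
  | zero =>
    refine ⟨hB 0, hA 0, ?_⟩
    simp [ha0]
  | succ n ih =>
    obtain ⟨ih2, ih1, ih0⟩ := ih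
    refine ⟨hB (n + 1), hA (n + 1), ?_⟩
    have hC' := hC (n + 1) (by omega)
    rw [show 3 * ((n + 1 : ℕ) : ℤ) - 1 = 3 * (n : ℤ) + 2 by push_cast; ring,
      ih2, ih1, ih0] at hC'
    have hP : (∏ k ∈ Finset.range n, (1 - q ^ (3 * (k + 1)))) ≠ 0 := by
      refine Finset.prod_ne_zero_iff.mpr fun k _ => sub_ne_zero.mpr ?_
      exact fun h => hqn (3 * (k + 1)) (by omega) h.symm
    have h1q : (1 - q ^ (3 * n + 3)) ≠ 0 :=
      sub_ne_zero.mpr fun h => hqn (3 * n + 3) (by omega) h.symm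
    obtain ⟨c, hc⟩ := Nat.even_mul_succ_self n
    have hEq : 3 * (n + 1) * (n + 1 + 1) / 2 = 3 * n * (n + 1) / 2 + 3 * (n + 1) := by
      have h1 : 3 * (n + 1) * (n + 1 + 1) = 3 * (n * (n + 1)) + 6 * (n + 1) := by ring
      have h3 : 3 * n * (n + 1) = 3 * (n * (n + 1)) := by ring
      omega
    rw [Finset.prod_range_succ, hEq, pow_add q,
      show 3 * (n + 1) = 3 * n + 3 from by ring, pow_add a1 (3 * n) 3, pow_succ (-1 : ℂ) n]
    rw [show 3 * (n + 1) = 3 * n + 3 from by ring] at hC'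
    rw [eq_div_iff (mul_ne_zero hP h1q)]
    field_simp at hC'
    push_cast at hC' ⊢
    linear_combination hC'
end
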